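/- arXiv:1507.00881 — 8 statements merged into one kernel-verified Lean document; each statement's English description precedes it below -/
import Mathlib

section
/- A vertex w strongly resolves vertices u and v in a connected graph G if and only if d(w,u) = d(w,v) + d(v,u) or d(w,v) = d(w,u) + d(u,v). If S is a strong resolving set of G and u, v are distinct vertices with d(u,v) equal to the diameter of G, then u ∈ S or v ∈ S. -/
/-- A vertex `w` strongly resolves vertices `u` and `v` in graph `G`:
`u` lies on a shortest `v`–`w` path or `v` lies on a shortest `u`–`w` path,
equivalently via distances. -/
def StronglyResolves {V : Type*} (G : SimpleGraph V) (w u v : V) : Prop :=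
  G.dist w u = G.dist w v + G.dist v u ∨ G.dist w v = G.dist w u + G.dist u v

/-- `S` is a strong resolving set of `G`. -/
def IsStrongResolvingSet {V : Type*} (G : SimpleGraph V) (S : Set V) : Prop :=
  ∀ u v : V, u ≠ v → ∃ w ∈ S, StronglyResolves G w u v

/-- The strong metric dimension: minimum cardinality of a strong resolving set. -/
noncomputable def sdim {V : Type*} (G : SimpleGraph V) : ℕ :=
  sInf {m : ℕ | ∃ S : Set V, IsStrongResolvingSet G S ∧ S.ncard = m}

/-- Mutually maximally distant vertices. -/
def MutuallyMaximallyDistant {V : Type*} (G : SimpleGraph V) (u v : V) : Prop :=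
  u ≠ v ∧ (∀ w : V, G.Adj u w → G.dist w v ≤ G.dist u v) ∧
    (∀ w : V, G.Adj v w → G.dist u w ≤ G.dist u v)

/-- The generalized Petersen graph `GP n k`, with outer vertices `Sum.inl i` (the `uᵢ`)
and inner vertices `Sum.inr i` (the `vᵢ`), indices in `ZMod n`. -/
def GP (n k : ℕ) : SimpleGraph (ZMod n ⊕ ZMod n) where
  Adj x y := match x, y with
    | Sum.inl i, Sum.inl j => i ≠ j ∧ (j = i + 1 ∨ i = j + 1)
    | Sum.inl i, Sum.inr j => i = j
    | Sum.inr i, Sum.inl j => i = j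
    | Sum.inr i, Sum.inr j => i ≠ j ∧ (j = i + (k : ZMod n) ∨ i = j + (k : ZMod n))
  symm := ⟨by rintro (i|i) (j|j) h <;> simp_all <;> tauto⟩
  loopless := ⟨by rintro (i|i) h <;> simp_all⟩

lemma ediam_ne_top' {V : Type*} [Fintype V] (G : SimpleGraph V) (hG : G.Connected) :
    G.ediam ≠ ⊤ := by
  have : Nonempty V := hG.nonempty
  have hlt : ∀ a b : V, G.edist a b < ⊤ :=
    fun a b => lt_top_iff_ne_top.mpr (SimpleGraph.edist_ne_top_iff_reachable.mpr (hG a b))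
  have hb : (Finset.univ : Finset (V × V)).sup (fun p => G.edist p.1 p.2) < ⊤ := by
    rw [Finset.sup_lt_iff (by simp)]
    intro p _; exact hlt p.1 p.2
  refine ne_top_of_le_ne_top hb.ne ?_
  rw [SimpleGraph.ediam]
  exact iSup₂_le fun a b => Finset.le_sup (f := fun p : V × V => G.edist p.1 p.2) (Finset.mem_univ (a, b))

/-- If `S` is a strong resolving set of a connected graph `G` and `u ≠ v` are at
distance equal to the diameter, then `u ∈ S` or `v ∈ S`. -/
theorem stmt_0 {V : Type*} [Fintype V] (G : SimpleGraph V) (hG : G.Connected)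
    (S : Set V) (hS : IsStrongResolvingSet G S) (u v : V) (huv : u ≠ v)
    (hd : G.dist u v = G.diam) : u ∈ S ∨ v ∈ S := by
  obtain ⟨w, hwS, hw⟩ := hS u v huv
  have hne := ediam_ne_top' G hG
  rcases hw with h | h
  · right
    have h1 : G.dist w u ≤ G.diam := SimpleGraph.dist_le_diam hne
    have h2 : G.dist v u = G.diam := by rw [SimpleGraph.dist_comm]; exact hd
    have : G.dist w v = 0 := by omega
    rwa [(hG.dist_eq_zero_iff).mp this] at hwS
  · left
    have h1 : G.dist w v ≤ G.diam := SimpleGraph.dist_le_diam hne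
    have : G.dist w u = 0 := by omega
    rwa [(hG.dist_eq_zero_iff).mp this] at hwS
end

section
/- If S is a strong resolving set of a connected graph G, then for every pair of mutually maximally distant vertices u, v of G, it holds that u ∈ S or v ∈ S. -/
private lemma step_lem {V : Type*} (G : SimpleGraph V) (hG : G.Connected) {v w : V}
    (hvw : v ≠ w) : ∃ x, G.Adj v x ∧ G.dist x w + 1 ≤ G.dist v w := by
  obtain ⟨p, hp⟩ := hG.exists_walk_length_eq_dist v w
  cases p with
  | nil => exact absurd rfl hvw
  | cons hadj q =>
    refine ⟨_, hadj, ?_⟩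
    have := SimpleGraph.dist_le q
    simp [SimpleGraph.Walk.length_cons] at hp
    omega

/-- If `S` is a strong resolving set of a connected graph `G`, then for every pair of
mutually maximally distant vertices `u, v`, `u ∈ S` or `v ∈ S`. -/
theorem stmt_1 {V : Type*} [Fintype V] (G : SimpleGraph V) (hG : G.Connected)
    (S : Set V) (hS : IsStrongResolvingSet G S) (u v : V)
    (h : MutuallyMaximallyDistant G u v) : u ∈ S ∨ v ∈ S := by
  by_contra hc
  push_neg at hc
  obtain ⟨huS, hvS⟩ := hc
  obtain ⟨w, hwS, hw⟩ := hS u v h.1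
  have hwu : v ≠ w := fun e => hvS (e ▸ hwS)
  have hwu' : u ≠ w := fun e => huS (e ▸ hwS)
  cases hw with
  | inl hw =>
    -- dist w u = dist w v + dist v u : v between w and u; take neighbor of v toward w
    obtain ⟨x, hadj, hx⟩ := step_lem G hG hwu
    have h1 : G.dist u x ≤ G.dist u v := h.2.2 x hadj
    have tri : G.dist w u ≤ G.dist w x + G.dist x u := hG.dist_triangle
    rw [SimpleGraph.dist_comm (u := w) (v := x), SimpleGraph.dist_comm (u := x) (v := u)] at tri
    rw [SimpleGraph.dist_comm (u := v) (v := w)] at hx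
    rw [SimpleGraph.dist_comm (u := v) (v := u)] at hw
    omega
  | inr hw =>
    obtain ⟨x, hadj, hx⟩ := step_lem G hG hwu'
    have h1 : G.dist x v ≤ G.dist u v := h.2.1 x hadj
    have tri : G.dist w v ≤ G.dist w x + G.dist x v := hG.dist_triangle
    rw [SimpleGraph.dist_comm (u := w) (v := x)] at tri
    rw [SimpleGraph.dist_comm (u := u) (v := w)] at hx
    omega
end

section
/- The strong metric dimension of the generalized Petersen graph GP(n,1) equals n, for n ≥ 3. -/
namespace GPaux
open Sum

/-- cyclic distance viewed from `i` to `j` in `ZMod n`. -/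
def cyc (n : ℕ) (i j : ZMod n) : ℕ := min (j - i).val (n - (j - i).val)

variable {n : ℕ}

lemma cyc_self (i : ZMod n) : cyc n i i = 0 := by simp [cyc]

lemma cyc_eq_zero_iff [NeZero n] (i j : ZMod n) : cyc n i j = 0 ↔ i = j := by
  have h := ZMod.val_lt (j - i)
  constructor
  · intro h0
    rcases Nat.min_eq_zero_iff.mp h0 with h1 | h1
    · exact (sub_eq_zero.mp ((ZMod.val_eq_zero _).mp h1)).symm
    · omega
  · rintro rfl; exact cyc_self i

lemma one_ne_zero' (hn : 3 ≤ n) : (1 : ZMod n) ≠ 0 := by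
  intro h
  have : (1 : ZMod n).val = 0 := by rw [h]; exact ZMod.val_zero
  rw [ZMod.val_one'' (by omega)] at this
  omega

lemma val_add_one (hn : 3 ≤ n) (a : ZMod n) : (a + 1).val = (a.val + 1) % n := by
  have : NeZero n := ⟨by omega⟩
  rw [ZMod.val_add, ZMod.val_one'' (by omega)]

lemma val_sub_one (hn : 3 ≤ n) (a : ZMod n) : (a - 1).val = (a.val + (n - 1)) % n := by
  have : NeZero n := ⟨by omega⟩
  have h1 : (-1 : ZMod n).val = n - 1 := by
    rw [ZMod.neg_val]
    simp [one_ne_zero' hn, ZMod.val_one'' (show n ≠ 1 by omega)]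
  rw [sub_eq_add_neg, ZMod.val_add, h1]

/-- stepping the second argument up changes `cyc` by at most 1 -/
lemma cyc_succ_le (hn : 3 ≤ n) (i j : ZMod n) : cyc n i (j + 1) ≤ cyc n i j + 1 := by
  have : NeZero n := ⟨by omega⟩
  have hd : (j - i).val < n := ZMod.val_lt _
  have e : (j + 1 - i).val = ((j - i).val + 1) % n := by
    rw [show j + 1 - i = (j - i) + 1 by ring, val_add_one hn]
  unfold cyc
  rcases Nat.lt_or_ge ((j - i).val + 1) n with h | h
  · rw [e, Nat.mod_eq_of_lt h]; omega
  · have : ((j - i).val + 1) % n = 0 := by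
      have : (j - i).val + 1 = n := by omega
      simp [this]
    rw [e, this]; omega

lemma cyc_le_succ (hn : 3 ≤ n) (i j : ZMod n) : cyc n i j ≤ cyc n i (j + 1) + 1 := by
  have : NeZero n := ⟨by omega⟩
  have hd : (j - i).val < n := ZMod.val_lt _
  have e : (j + 1 - i).val = ((j - i).val + 1) % n := by
    rw [show j + 1 - i = (j - i) + 1 by ring, val_add_one hn]
  unfold cyc
  rcases Nat.lt_or_ge ((j - i).val + 1) n with h | h
  · rw [e, Nat.mod_eq_of_lt h]; omega
  · have h0 : ((j - i).val + 1) % n = 0 := by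
      have : (j - i).val + 1 = n := by omega
      simp [this]
    rw [e, h0]; omega

/-- descent: if `i ≠ j` we can move `j` one step closer to `i`. -/
lemma cyc_descent (hn : 3 ≤ n) {i j : ZMod n} (h : i ≠ j) :
    cyc n i (j + 1) + 1 ≤ cyc n i j ∨ cyc n i (j - 1) + 1 ≤ cyc n i j := by
  have : NeZero n := ⟨by omega⟩
  have hd : (j - i).val < n := ZMod.val_lt _
  have hd0 : (j - i).val ≠ 0 := by
    intro h0; exact h (sub_eq_zero.mp ((ZMod.val_eq_zero _).mp h0)).symm
  have e1 : (j + 1 - i).val = ((j - i).val + 1) % n := by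
    rw [show j + 1 - i = (j - i) + 1 by ring, val_add_one hn]
  have e2 : (j - 1 - i).val = ((j - i).val + (n - 1)) % n := by
    rw [show j - 1 - i = (j - i) - 1 by ring, val_sub_one hn]
  rcases Nat.le_total (n - (j - i).val) ((j - i).val) with hc | hc
  · -- j - i large: step up
    left
    unfold cyc
    rcases Nat.lt_or_ge ((j - i).val + 1) n with h2 | h2
    · rw [e1, Nat.mod_eq_of_lt h2]; omega
    · have h0 : ((j - i).val + 1) % n = 0 := by
        have : (j - i).val + 1 = n := by omega
        simp [this]
      rw [e1, h0]; omega
  · -- j - i small: step down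
    right
    unfold cyc
    have h2 : ((j - i).val + (n - 1)) % n = (j - i).val - 1 := by
      have : (j - i).val + (n - 1) = n + ((j - i).val - 1) := by omega
      rw [this, Nat.add_mod_left, Nat.mod_eq_of_lt (by omega)]
    rw [e2, h2]; omega




lemma cyc_add_natCast (hn : 3 ≤ n) (a : ℕ) (ha : a ≤ n) (i : ZMod n) :
    cyc n i (i + (a : ZMod n)) = min a (n - a) := by
  have : NeZero n := ⟨by omega⟩
  have e : (i + (a : ZMod n) - i).val = a % n := by
    rw [show i + (a : ZMod n) - i = (a : ZMod n) by ring, ZMod.val_natCast]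
  unfold cyc
  rcases Nat.lt_or_ge a n with h | h
  · rw [e, Nat.mod_eq_of_lt h]
  · have han : a = n := by omega
    subst han
    simp [e]

lemma cyc_add_natCast' (hn : 3 ≤ n) (a : ℕ) (ha : a ≤ n) (i : ZMod n) :
    cyc n (i + (a : ZMod n)) i = min a (n - a) := by
  have : NeZero n := ⟨by omega⟩
  have e : (i - (i + (a : ZMod n))).val = (n - a % n) % n := by
    rw [show i - (i + (a : ZMod n)) = -(a : ZMod n) by ring, ZMod.neg_val', ZMod.val_natCast]
  unfold cyc
  rcases Nat.lt_or_ge a n with h | h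
  · rcases Nat.eq_zero_or_pos a with rfl | ha0
    · simp [e]
    · rw [e, Nat.mod_eq_of_lt h, Nat.mod_eq_of_lt (by omega)]
      omega
  · have han : a = n := by omega
    subst han
    simp [e]

def F (n : ℕ) : (ZMod n ⊕ ZMod n) → (ZMod n ⊕ ZMod n) → ℕ
  | Sum.inl i, Sum.inl j => cyc n i j
  | Sum.inl i, Sum.inr j => cyc n i j + 1
  | Sum.inr i, Sum.inl j => cyc n i j + 1
  | Sum.inr i, Sum.inr j => cyc n i j

lemma adj_inl_inl {i j : ZMod n} : (GP n 1).Adj (inl i) (inl j) ↔ i ≠ j ∧ (j = i + 1 ∨ i = j + 1) := Iff.rfl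
lemma adj_inl_inr {i j : ZMod n} : (GP n 1).Adj (inl i) (inr j) ↔ i = j := Iff.rfl
lemma adj_inr_inl {i j : ZMod n} : (GP n 1).Adj (inr i) (inl j) ↔ i = j := Iff.rfl
lemma adj_inr_inr {i j : ZMod n} : (GP n 1).Adj (inr i) (inr j) ↔ i ≠ j ∧ (j = i + 1 ∨ i = j + 1) := by
  show _ ∧ (j = i + ((1:ℕ) : ZMod n) ∨ i = j + ((1:ℕ) : ZMod n)) ↔ _
  norm_num

lemma ne_add_one (hn : 3 ≤ n) (i : ZMod n) : i ≠ i + 1 := by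
  intro h
  exact one_ne_zero' hn (left_eq_add.mp h)

lemma F_self (t : ZMod n ⊕ ZMod n) : F n t t = 0 := by
  cases t <;> simp [F, cyc_self]

lemma F_eq_zero [NeZero n] {t x : ZMod n ⊕ ZMod n} (h : F n t x = 0) : x = t := by
  cases t <;> cases x <;> simp only [F] at h <;> first
    | (exact congrArg _ ((cyc_eq_zero_iff _ _).mp h).symm)
    | omega

lemma F_lip (hn : 3 ≤ n) {x y : ZMod n ⊕ ZMod n} (t : ZMod n ⊕ ZMod n)
    (h : (GP n 1).Adj x y) : F n t x ≤ F n t y + 1 := by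
  obtain (a | a) := t <;> obtain (i | i) := x <;> obtain (j | j) := y <;>
    simp only [adj_inl_inl, adj_inl_inr, adj_inr_inl, adj_inr_inr] at h <;>
    simp only [F]
  · rcases h.2 with rfl | rfl
    · exact cyc_le_succ hn a i
    · exact cyc_succ_le hn a j
  · subst h; omega
  · subst h; omega
  · rcases h.2 with rfl | rfl
    · have := cyc_le_succ hn a i; omega
    · have := cyc_succ_le hn a j; omega
  · rcases h.2 with rfl | rfl
    · have := cyc_le_succ hn a i; omega
    · have := cyc_succ_le hn a j; omega
  · subst h; omega
  · subst h; omega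
  · rcases h.2 with rfl | rfl
    · exact cyc_le_succ hn a i
    · exact cyc_succ_le hn a j

lemma F_descent (hn : 3 ≤ n) {t x : ZMod n ⊕ ZMod n} (h : x ≠ t) :
    ∃ y, (GP n 1).Adj x y ∧ F n t y + 1 ≤ F n t x := by
  have hNZ : NeZero n := ⟨by omega⟩
  have h1 : ∀ i : ZMod n, i ≠ i + 1 := ne_add_one hn
  have h2 : ∀ i : ZMod n, i ≠ i - 1 := by
    intro i hi
    exact one_ne_zero' hn (by linear_combination hi)
  obtain (a | a) := t <;> obtain (i | i) := x
  · have hia : a ≠ i := fun hh => h (by rw [hh])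
    rcases cyc_descent hn hia with hc | hc
    · exact ⟨inl (i + 1), adj_inl_inl.mpr ⟨h1 i, Or.inl rfl⟩, by simpa [F] using hc⟩
    · refine ⟨inl (i - 1), adj_inl_inl.mpr ⟨h2 i, Or.inr (by ring)⟩, by simpa [F] using hc⟩
  · by_cases hia : a = i
    · subst hia
      exact ⟨inl a, adj_inr_inl.mpr rfl, by simp [F, cyc_self]⟩
    · rcases cyc_descent hn hia with hc | hc
      · exact ⟨inr (i + 1), adj_inr_inr.mpr ⟨h1 i, Or.inl rfl⟩, by simp [F]; omega⟩
      · exact ⟨inr (i - 1), adj_inr_inr.mpr ⟨h2 i, Or.inr (by ring)⟩, by simp [F]; omega⟩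
  · by_cases hia : a = i
    · subst hia
      exact ⟨inr a, adj_inl_inr.mpr rfl, by simp [F, cyc_self]⟩
    · rcases cyc_descent hn hia with hc | hc
      · exact ⟨inl (i + 1), adj_inl_inl.mpr ⟨h1 i, Or.inl rfl⟩, by simp [F]; omega⟩
      · exact ⟨inl (i - 1), adj_inl_inl.mpr ⟨h2 i, Or.inr (by ring)⟩, by simp [F]; omega⟩
  · have hia : a ≠ i := fun hh => h (by rw [hh])
    rcases cyc_descent hn hia with hc | hc
    · exact ⟨inr (i + 1), adj_inr_inr.mpr ⟨h1 i, Or.inl rfl⟩, by simpa [F] using hc⟩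
    · exact ⟨inr (i - 1), adj_inr_inr.mpr ⟨h2 i, Or.inr (by ring)⟩, by simpa [F] using hc⟩

lemma reachable_aux (hn : 3 ≤ n) (t : ZMod n ⊕ ZMod n) :
    ∀ (m : ℕ) (x : ZMod n ⊕ ZMod n), F n t x ≤ m → (GP n 1).Reachable x t := by
  have hNZ : NeZero n := ⟨by omega⟩
  intro m
  induction m with
  | zero => intro x hx; rw [F_eq_zero (Nat.le_zero.mp hx)]
  | succ m ih =>
    intro x hx
    by_cases hxt : x = t
    · rw [hxt]
    · obtain ⟨y, hadj, hy⟩ := F_descent hn hxt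
      exact (hadj.reachable).trans (ih y (by omega))

lemma connected (hn : 3 ≤ n) : (GP n 1).Connected := by
  rw [SimpleGraph.connected_iff]
  refine ⟨fun x t => reachable_aux hn t (F n t x) x le_rfl, ⟨inl 0⟩⟩

lemma dist_le_F (hn : 3 ≤ n) (t : ZMod n ⊕ ZMod n) :
    ∀ (m : ℕ) (x : ZMod n ⊕ ZMod n), F n t x ≤ m → (GP n 1).dist x t ≤ F n t x := by
  have hNZ : NeZero n := ⟨by omega⟩
  intro m
  induction m with
  | zero => intro x hx; rw [F_eq_zero (Nat.le_zero.mp hx)]; simp [SimpleGraph.dist_self]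
  | succ m ih =>
    intro x hx
    by_cases hxt : x = t
    · subst hxt; simp [SimpleGraph.dist_self, F_self]
    · obtain ⟨y, hadj, hy⟩ := F_descent hn hxt
      calc (GP n 1).dist x t ≤ (GP n 1).dist x y + (GP n 1).dist y t :=
            (connected hn).dist_triangle
        _ ≤ 1 + F n t y := by
            have h1 : (GP n 1).dist x y ≤ 1 := by
              simpa using SimpleGraph.dist_le (hadj.toWalk)
            have h2 := ih y (by omega)
            omega
        _ ≤ F n t x := by omega

lemma F_le_walk (hn : 3 ≤ n) :
    ∀ {x t : ZMod n ⊕ ZMod n} (p : (GP n 1).Walk x t), F n t x ≤ p.length := by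
  intro x t p
  induction p with
  | nil => simp [F_self]
  | cons hadj q ih =>
    simp only [SimpleGraph.Walk.length_cons]
    exact le_trans (F_lip hn _ hadj) (Nat.add_le_add_right ih 1)

theorem dist_eq (hn : 3 ≤ n) (x t : ZMod n ⊕ ZMod n) : (GP n 1).dist x t = F n t x := by
  refine le_antisymm (dist_le_F hn t (F n t x) x le_rfl) ?_
  obtain ⟨p, hp⟩ := ((connected hn) x t).exists_walk_length_eq_dist
  rw [← hp]
  exact F_le_walk hn p


end GPaux

-- PART2
section Part2
variable {n : ℕ}
open Sum GPaux SimpleGraph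

namespace GPaux

/-- the `1 - m` style cast -/
lemma cast_sub_nat (hn : 3 ≤ n) {a : ℕ} (ha : a ≤ n) :
    ((n - a : ℕ) : ZMod n) = -(a : ZMod n) := by
  have : ((n - a : ℕ) : ZMod n) = ((n : ℕ) : ZMod n) - (a : ZMod n) := by
    push_cast [Nat.cast_sub ha]; ring
  rw [this, ZMod.natCast_self]; ring

lemma dist_inl_inl (hn : 3 ≤ n) (i j : ZMod n) :
    (GP n 1).dist (inl i) (inl j) = cyc n j i := dist_eq hn _ _

lemma dist_inl_inr (hn : 3 ≤ n) (i j : ZMod n) :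
    (GP n 1).dist (inl i) (inr j) = cyc n j i + 1 := dist_eq hn _ _

lemma dist_inr_inl (hn : 3 ≤ n) (i j : ZMod n) :
    (GP n 1).dist (inr i) (inl j) = cyc n j i + 1 := dist_eq hn _ _

lemma dist_inr_inr (hn : 3 ≤ n) (i j : ZMod n) :
    (GP n 1).dist (inr i) (inr j) = cyc n j i := dist_eq hn _ _

/-- distance between the special pair -/
lemma dist_pair (hn : 3 ≤ n) (i : ZMod n) :
    (GP n 1).dist (inl i) (inr (i + (n / 2 : ℕ))) = n / 2 + 1 := by
  rw [dist_inl_inr hn, cyc_add_natCast' hn (n / 2) (by omega) i]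
  omega

/-- every neighbor of `inl i` is within `n/2 + 1` of `inr (i + n/2)`. -/
lemma nbA (hn : 3 ≤ n) (i : ZMod n) {x : ZMod n ⊕ ZMod n}
    (h : (GP n 1).Adj (inl i) x) :
    (GP n 1).dist x (inr (i + (n / 2 : ℕ))) ≤ n / 2 + 1 := by
  have hNZ : NeZero n := ⟨by omega⟩
  set m := n / 2 with hm
  obtain (j | j) := x
  · rw [adj_inl_inl] at h
    rw [dist_inl_inr hn]
    rcases h.2 with rfl | hj
    · -- j = i + 1
      have e1 : (i + 1 : ZMod n) = (i + (m : ℕ)) + ((n + 1 - m : ℕ) : ZMod n) := by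
        have h1 : ((n + 1 - m : ℕ) : ZMod n) = 1 - (m : ZMod n) := by
          push_cast [Nat.cast_sub (show m ≤ n + 1 by omega)]
          simp [ZMod.natCast_self]
        rw [h1]; ring
      rw [e1, cyc_add_natCast hn (n + 1 - m) (by omega) _]
      omega
    · -- i = j + 1, so j = i - 1
      have hj' : (j : ZMod n) = (i + (m : ℕ)) + ((n - 1 - m : ℕ) : ZMod n) := by
        have h1 : ((n - 1 - m : ℕ) : ZMod n) = -(1 + (m : ZMod n)) := by
          have : (n - 1 - m : ℕ) = n - (1 + m) := by omega
          rw [this, cast_sub_nat hn (by omega)]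
          push_cast; ring
        rw [h1]
        have : j = i - 1 := by linear_combination -hj
        rw [this]; ring
      rw [hj', cyc_add_natCast hn (n - 1 - m) (by omega) _]
      omega
  · rw [adj_inl_inr] at h
    subst h
    rw [dist_inr_inr hn, cyc_add_natCast' hn m (by omega) _]
    omega

/-- every neighbor of `inr (i + n/2)` is within `n/2 + 1` of `inl i`. -/
lemma nbB (hn : 3 ≤ n) (i : ZMod n) {x : ZMod n ⊕ ZMod n}
    (h : (GP n 1).Adj (inr (i + (n / 2 : ℕ))) x) :
    (GP n 1).dist (inl i) x ≤ n / 2 + 1 := by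
  have hNZ : NeZero n := ⟨by omega⟩
  set m := n / 2 with hm
  obtain (j | j) := x
  · rw [adj_inr_inl] at h
    rw [dist_inl_inl hn, ← h, cyc_add_natCast' hn m (by omega) i]
    omega
  · rw [adj_inr_inr] at h
    rw [dist_inl_inr hn]
    rcases h.2 with rfl | hj
    · -- j = (i + m) + 1
      have e1 : (i + (m : ZMod n)) + 1 = i + ((m + 1 : ℕ) : ZMod n) := by push_cast; ring
      rw [e1, cyc_add_natCast' hn (m + 1) (by omega) i]
      omega
    · -- i + m = j + 1, so j = i + (m - 1)
      have hj' : (j : ZMod n) = i + ((m - 1 : ℕ) : ZMod n) := by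
        have h1 : ((m - 1 : ℕ) : ZMod n) = (m : ZMod n) - 1 := by
          push_cast [Nat.cast_sub (show 1 ≤ m by omega)]; ring
        rw [h1]
        linear_combination -hj
      rw [hj', cyc_add_natCast' hn (m - 1) (by omega) i]
      omega

/-- extracting a closer neighbor along a shortest walk -/
lemma exists_neighbor_dist {V : Type*} {G : SimpleGraph V} (hconn : G.Connected)
    (u w : V) (h : u ≠ w) : ∃ y, G.Adj u y ∧ G.dist y w + 1 ≤ G.dist u w := by
  obtain ⟨p, hp⟩ := (hconn u w).exists_walk_length_eq_dist
  cases p with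
  | nil => exact absurd rfl h
  | cons hadj q =>
      refine ⟨_, hadj, ?_⟩
      have := SimpleGraph.dist_le q
      simp only [SimpleGraph.Walk.length_cons] at hp
      omega

/-- a vertex strongly resolving the special pair must be one of its endpoints. -/
lemma resolver_endpoint (hn : 3 ≤ n) (i : ZMod n) (w : ZMod n ⊕ ZMod n)
    (hw : StronglyResolves (GP n 1) w (inl i) (inr (i + (n / 2 : ℕ)))) :
    w = inl i ∨ w = inr (i + (n / 2 : ℕ)) := by
  have hNZ : NeZero n := ⟨by omega⟩
  by_contra hcon
  push_neg at hcon
  obtain ⟨hwa, hwb⟩ := hcon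
  have hconn := connected hn
  have hdab : (GP n 1).dist (inl i) (inr (i + ((n / 2 : ℕ) : ZMod n))) = n / 2 + 1 :=
    dist_pair hn i
  have hba : (GP n 1).dist (inr (i + ((n / 2 : ℕ) : ZMod n))) (inl i) = n / 2 + 1 := by
    rw [SimpleGraph.dist_comm]; exact hdab
  rcases hw with hc | hc
  · -- dist w a = dist w b + dist b a : find neighbor of b closer to w
    obtain ⟨y, hadj, hy⟩ := exists_neighbor_dist hconn _ w (Ne.symm hwb)
    have hay : (GP n 1).dist (inl i) y ≤ n / 2 + 1 := nbB hn i hadj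
    have htri : (GP n 1).dist w (inl i) ≤ (GP n 1).dist w y + (GP n 1).dist y (inl i) :=
      hconn.dist_triangle
    have hpos : 0 < (GP n 1).dist w (inr (i + ((n / 2 : ℕ) : ZMod n))) :=
      hconn.pos_dist_of_ne hwb
    rw [SimpleGraph.dist_comm (G := GP n 1) (u := w) (v := y)] at htri
    rw [SimpleGraph.dist_comm (G := GP n 1) (u := y) (v := inl i)] at htri
    rw [SimpleGraph.dist_comm
      (G := GP n 1) (u := inr (i + ((n / 2 : ℕ) : ZMod n))) (v := w)] at hy
    omega
  · -- dist w b = dist w a + dist a b : find neighbor of a closer to w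
    obtain ⟨y, hadj, hy⟩ := exists_neighbor_dist hconn _ w (Ne.symm hwa)
    have hyb : (GP n 1).dist y (inr (i + ((n / 2 : ℕ) : ZMod n))) ≤ n / 2 + 1 :=
      nbA hn i hadj
    have htri : (GP n 1).dist w (inr (i + ((n / 2 : ℕ) : ZMod n))) ≤
        (GP n 1).dist w y + (GP n 1).dist y (inr (i + ((n / 2 : ℕ) : ZMod n))) :=
      hconn.dist_triangle
    have hpos : 0 < (GP n 1).dist w (inl i) := hconn.pos_dist_of_ne hwa
    rw [SimpleGraph.dist_comm (G := GP n 1) (u := w) (v := y)] at htri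
    rw [SimpleGraph.dist_comm (G := GP n 1) (u := inl i) (v := w)] at hy
    omega

end GPaux
end Part2

open Sum GPaux

/-- `sdim (GP n 1) = n` for `n ≥ 3`. -/
theorem stmt_2 (n : ℕ) (hn : 3 ≤ n) : sdim (GP n 1) = n := by
  classical
  have hNZ : NeZero n := ⟨by omega⟩
  -- the upper bound set : all inner vertices
  have hmem : n ∈ {k : ℕ | ∃ S : Set (ZMod n ⊕ ZMod n),
      IsStrongResolvingSet (GP n 1) S ∧ S.ncard = k} := by
    refine ⟨Set.range Sum.inr, ?_, ?_⟩
    · intro u v huv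
      obtain (i | i) := u <;> obtain (j | j) := v
      · -- both outer : use inr i
        refine ⟨inr i, ⟨i, rfl⟩, Or.inr ?_⟩
        rw [dist_inr_inl hn, dist_inr_inl hn, dist_inl_inl hn, cyc_self]
        omega
      · -- outer,inner : use inr j
        refine ⟨inr j, ⟨j, rfl⟩, Or.inl ?_⟩
        rw [SimpleGraph.dist_self]
        rw [SimpleGraph.dist_comm (G := GP n 1) (u := inr j) (v := inl i)]
        omega
      · -- inner,outer : use inr i = u
        refine ⟨inr i, ⟨i, rfl⟩, Or.inr ?_⟩
        rw [SimpleGraph.dist_self]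
        omega
      · -- both inner : use u
        refine ⟨inr i, ⟨i, rfl⟩, Or.inr ?_⟩
        rw [SimpleGraph.dist_self]
        omega
    · rw [← Nat.card_coe_set_eq,
        Nat.card_congr (Equiv.ofInjective _ Sum.inr_injective).symm, Nat.card_zmod]
  -- lower bound : every strong resolving set has at least n elements
  have hlb : ∀ k ∈ {k : ℕ | ∃ S : Set (ZMod n ⊕ ZMod n),
      IsStrongResolvingSet (GP n 1) S ∧ S.ncard = k}, n ≤ k := by
    rintro k ⟨S, hS, rfl⟩
    have hsel : ∀ i : ZMod n, inl i ∈ S ∨ inr (i + ((n / 2 : ℕ) : ZMod n)) ∈ S := by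
      intro i
      obtain ⟨w, hwS, hw⟩ := hS (inl i) (inr (i + ((n / 2 : ℕ) : ZMod n))) (by simp)
      rcases resolver_endpoint hn i w hw with rfl | rfl
      · exact Or.inl hwS
      · exact Or.inr hwS
    set f : ZMod n → ZMod n ⊕ ZMod n :=
      fun i => if inl i ∈ S then inl i else inr (i + ((n / 2 : ℕ) : ZMod n)) with hf
    have hfS : ∀ i, f i ∈ S := by
      intro i
      by_cases h : inl i ∈ S
      · simp only [hf, if_pos h]; exact h
      · simp only [hf, if_neg h]; exact (hsel i).resolve_left h
    have hfinj : Function.Injective f := by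
      intro i j hij
      by_cases h1 : inl i ∈ S <;> by_cases h2 : inl j ∈ S <;>
        simp only [hf, h1, h2, if_true, if_false] at hij <;>
        first
          | (exact inl_injective hij)
          | (have := inr_injective hij; exact add_right_cancel this)
          | simp at hij
    have : Nat.card (ZMod n) ≤ Nat.card S := by
      apply Nat.card_le_card_of_injective (fun i => (⟨f i, hfS i⟩ : S))
      intro i j hij
      exact hfinj (congrArg Subtype.val hij)
    rwa [Nat.card_zmod, Nat.card_coe_set_eq] at this
  refine le_antisymm (Nat.sInf_le hmem) (le_csInf ⟨n, hmem⟩ hlb)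
end

section
/- In the generalized Petersen graph GP(4k+2,2) with k ≥ 2, for every i with 0 ≤ i ≤ 2k one has d(u_i, u_{i+2k+1}) = d(v_i, v_{i+2k+1}) = k+3, and this value equals the diameter of GP(4k+2,2). -/
open SimpleGraph Sum

namespace GP4
variable {k : ℕ}

instance : NeZero (4*k+2) := ⟨by omega⟩
instance : Fact (1 < 4*k+2) := ⟨by omega⟩

lemma one_ne : (1 : ZMod (4*k+2)) ≠ 0 := fun h => by
  have h2 := (ZMod.natCast_eq_zero_iff 1 (4*k+2)).mp (by exact_mod_cast h)
  have := Nat.le_of_dvd one_pos h2; omega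

lemma two_ne (hk : 2 ≤ k) : (2 : ZMod (4*k+2)) ≠ 0 := fun h => by
  have h2 := (ZMod.natCast_eq_zero_iff 2 (4*k+2)).mp (by exact_mod_cast h)
  have := Nat.le_of_dvd two_pos h2; omega

lemma adj_uu (i : ZMod (4*k+2)) : (GP (4*k+2) 2).Adj (inl i) (inl (i+1)) :=
  ⟨fun h => one_ne (left_eq_add.mp h), Or.inl rfl⟩

lemma adj_uv (i : ZMod (4*k+2)) : (GP (4*k+2) 2).Adj (inl i) (inr i) := rfl

lemma adj_vv (hk : 2 ≤ k) (i : ZMod (4*k+2)) : (GP (4*k+2) 2).Adj (inr i) (inr (i+2)) :=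
  ⟨fun h => two_ne hk (left_eq_add.mp h), Or.inl (by norm_num)⟩

lemma edist_le_one {x y} (h : (GP (4*k+2) 2).Adj x y) : (GP (4*k+2) 2).edist x y ≤ 1 :=
  (SimpleGraph.edist_eq_one_iff_adj.mpr h).le


lemma edist_uu (i : ZMod (4*k+2)) (m : ℕ) :
    (GP (4*k+2) 2).edist (inl i) (inl (i + (m : ZMod (4*k+2)))) ≤ (m : ℕ∞) := by
  induction m with
  | zero => simp
  | succ m ih =>
    have he : i + ((m+1 : ℕ) : ZMod (4*k+2)) = (i + (m : ZMod (4*k+2))) + 1 := by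
      push_cast; ring
    calc (GP (4*k+2) 2).edist (inl i) (inl (i + ((m+1:ℕ) : ZMod (4*k+2))))
        ≤ (GP (4*k+2) 2).edist (inl i) (inl (i + (m : ZMod (4*k+2)))) +
          (GP (4*k+2) 2).edist (inl (i + (m : ZMod (4*k+2)))) (inl (i + ((m+1:ℕ) : ZMod (4*k+2)))) :=
        SimpleGraph.edist_triangle
      _ ≤ (m : ℕ∞) + 1 := by
          refine add_le_add ih ?_
          rw [he]; exact edist_le_one (adj_uu _)
      _ = ((m+1 : ℕ) : ℕ∞) := by push_cast; ring

lemma edist_vv (hk : 2 ≤ k) (i : ZMod (4*k+2)) (m : ℕ) :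
    (GP (4*k+2) 2).edist (inr i) (inr (i + ((2*m : ℕ) : ZMod (4*k+2)))) ≤ (m : ℕ∞) := by
  induction m with
  | zero => simp
  | succ m ih =>
    have he : i + ((2*(m+1) : ℕ) : ZMod (4*k+2)) = (i + ((2*m : ℕ) : ZMod (4*k+2))) + 2 := by
      push_cast; ring
    calc (GP (4*k+2) 2).edist (inr i) (inr (i + ((2*(m+1):ℕ) : ZMod (4*k+2))))
        ≤ (GP (4*k+2) 2).edist (inr i) (inr (i + ((2*m:ℕ) : ZMod (4*k+2)))) +
          (GP (4*k+2) 2).edist (inr (i + ((2*m:ℕ) : ZMod (4*k+2)))) (inr (i + ((2*(m+1):ℕ) : ZMod (4*k+2)))) :=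
        SimpleGraph.edist_triangle
      _ ≤ (m : ℕ∞) + 1 := by
          refine add_le_add ih ?_
          rw [he]; exact edist_le_one (adj_vv hk _)
      _ = ((m+1 : ℕ) : ℕ∞) := by push_cast; ring


lemma edist_sym {x y} : (GP (4*k+2) 2).edist x y = (GP (4*k+2) 2).edist y x :=
  SimpleGraph.edist_comm

lemma helper (hk : 2 ≤ k) (i : ZMod (4*k+2)) (r : ℕ) (hr : r ≤ 2*k+1) :
    (GP (4*k+2) 2).edist (inl i) (inl (i + (r : ZMod (4*k+2)))) ≤ ((k+3 : ℕ) : ℕ∞) ∧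
    (GP (4*k+2) 2).edist (inl i) (inr (i + (r : ZMod (4*k+2)))) ≤ ((k+2 : ℕ) : ℕ∞) ∧
    (GP (4*k+2) 2).edist (inr i) (inr (i + (r : ZMod (4*k+2)))) ≤ ((k+3 : ℕ) : ℕ∞) ∧
    (GP (4*k+2) 2).edist (inr i) (inl (i + (r : ZMod (4*k+2)))) ≤ ((k+2 : ℕ) : ℕ∞) := by
  set G := GP (4*k+2) 2 with hG
  rcases Nat.even_or_odd r with ⟨m, hm⟩ | ⟨m, hm⟩
  · -- r = 2*m, m ≤ k
    obtain rfl : r = 2*m := by omega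
    have hmk : m ≤ k := by omega
    have hC : G.edist (inr i) (inr (i + ((2*m : ℕ) : ZMod (4*k+2)))) ≤ (m : ℕ∞) :=
      edist_vv hk i m
    have hB : G.edist (inl i) (inr (i + ((2*m : ℕ) : ZMod (4*k+2)))) ≤ (m : ℕ∞) + 1 := by
      calc G.edist (inl i) (inr (i + ((2*m : ℕ) : ZMod (4*k+2))))
          ≤ G.edist (inl i) (inr i) + G.edist (inr i) (inr (i + ((2*m : ℕ) : ZMod (4*k+2)))) :=
            SimpleGraph.edist_triangle
        _ ≤ 1 + (m : ℕ∞) := add_le_add (edist_le_one (adj_uv i)) hC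
        _ = (m : ℕ∞) + 1 := by ring
    have hA : G.edist (inl i) (inl (i + ((2*m : ℕ) : ZMod (4*k+2)))) ≤ (m : ℕ∞) + 2 := by
      calc G.edist (inl i) (inl (i + ((2*m : ℕ) : ZMod (4*k+2))))
          ≤ G.edist (inl i) (inr (i + ((2*m : ℕ) : ZMod (4*k+2)))) +
            G.edist (inr (i + ((2*m : ℕ) : ZMod (4*k+2)))) (inl (i + ((2*m : ℕ) : ZMod (4*k+2)))) :=
            SimpleGraph.edist_triangle
        _ ≤ ((m : ℕ∞) + 1) + 1 := add_le_add hB (edist_sym ▸ edist_le_one (adj_uv _))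
        _ = (m : ℕ∞) + 2 := by ring
    have hD : G.edist (inr i) (inl (i + ((2*m : ℕ) : ZMod (4*k+2)))) ≤ (m : ℕ∞) + 1 := by
      calc G.edist (inr i) (inl (i + ((2*m : ℕ) : ZMod (4*k+2))))
          ≤ G.edist (inr i) (inr (i + ((2*m : ℕ) : ZMod (4*k+2)))) +
            G.edist (inr (i + ((2*m : ℕ) : ZMod (4*k+2)))) (inl (i + ((2*m : ℕ) : ZMod (4*k+2)))) :=
            SimpleGraph.edist_triangle
        _ ≤ (m : ℕ∞) + 1 := add_le_add hC (edist_sym ▸ edist_le_one (adj_uv _))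
    exact ⟨le_trans hA (by exact_mod_cast (show (m:ℕ)+2 ≤ k+3 by omega)),
      le_trans hB (by exact_mod_cast (show (m:ℕ)+1 ≤ k+2 by omega)),
      le_trans hC (by exact_mod_cast (show (m:ℕ) ≤ k+3 by omega)),
      le_trans hD (by exact_mod_cast (show (m:ℕ)+1 ≤ k+2 by omega))⟩
  · -- r = 2*m+1, m ≤ k
    obtain rfl : r = 2*m+1 := by omega
    have hmk : m ≤ k := by omega
    have key : i + ((2*m+1 : ℕ) : ZMod (4*k+2)) = (i + 1) + ((2*m : ℕ) : ZMod (4*k+2)) := by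
      push_cast; ring
    have hB : G.edist (inl i) (inr (i + ((2*m+1 : ℕ) : ZMod (4*k+2)))) ≤ (m : ℕ∞) + 2 := by
      calc G.edist (inl i) (inr (i + ((2*m+1 : ℕ) : ZMod (4*k+2))))
          ≤ G.edist (inl i) (inl (i+1)) + G.edist (inl (i+1)) (inr (i + ((2*m+1 : ℕ) : ZMod (4*k+2)))) :=
            SimpleGraph.edist_triangle
        _ ≤ 1 + (G.edist (inl (i+1)) (inr (i+1)) +
              G.edist (inr (i+1)) (inr (i + ((2*m+1 : ℕ) : ZMod (4*k+2))))) :=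
            add_le_add (edist_le_one (adj_uu i)) SimpleGraph.edist_triangle
        _ ≤ 1 + (1 + (m : ℕ∞)) := by
            refine add_le_add le_rfl (add_le_add (edist_le_one (adj_uv _)) ?_)
            rw [key]; exact edist_vv hk (i+1) m
        _ = (m : ℕ∞) + 2 := by ring
    have hA : G.edist (inl i) (inl (i + ((2*m+1 : ℕ) : ZMod (4*k+2)))) ≤ (m : ℕ∞) + 3 := by
      calc G.edist (inl i) (inl (i + ((2*m+1 : ℕ) : ZMod (4*k+2))))
          ≤ G.edist (inl i) (inr (i + ((2*m+1 : ℕ) : ZMod (4*k+2)))) +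
            G.edist (inr (i + ((2*m+1 : ℕ) : ZMod (4*k+2)))) (inl (i + ((2*m+1 : ℕ) : ZMod (4*k+2)))) :=
            SimpleGraph.edist_triangle
        _ ≤ ((m : ℕ∞) + 2) + 1 := add_le_add hB (edist_sym ▸ edist_le_one (adj_uv _))
        _ = (m : ℕ∞) + 3 := by ring
    have hC : G.edist (inr i) (inr (i + ((2*m+1 : ℕ) : ZMod (4*k+2)))) ≤ (m : ℕ∞) + 3 := by
      calc G.edist (inr i) (inr (i + ((2*m+1 : ℕ) : ZMod (4*k+2))))
          ≤ G.edist (inr i) (inl i) + G.edist (inl i) (inr (i + ((2*m+1 : ℕ) : ZMod (4*k+2)))) :=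
            SimpleGraph.edist_triangle
        _ ≤ 1 + ((m : ℕ∞) + 2) := add_le_add (edist_sym ▸ edist_le_one (adj_uv _)) hB
        _ = (m : ℕ∞) + 3 := by ring
    have key2 : i + ((2*m+1 : ℕ) : ZMod (4*k+2)) = (i + ((2*m : ℕ) : ZMod (4*k+2))) + 1 := by
      push_cast; ring
    have hD : G.edist (inr i) (inl (i + ((2*m+1 : ℕ) : ZMod (4*k+2)))) ≤ (m : ℕ∞) + 2 := by
      calc G.edist (inr i) (inl (i + ((2*m+1 : ℕ) : ZMod (4*k+2))))
          ≤ G.edist (inr i) (inr (i + ((2*m : ℕ) : ZMod (4*k+2)))) +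
            G.edist (inr (i + ((2*m : ℕ) : ZMod (4*k+2)))) (inl (i + ((2*m+1 : ℕ) : ZMod (4*k+2)))) :=
            SimpleGraph.edist_triangle
        _ ≤ (m : ℕ∞) + (G.edist (inr (i + ((2*m : ℕ) : ZMod (4*k+2)))) (inl (i + ((2*m : ℕ) : ZMod (4*k+2)))) +
              G.edist (inl (i + ((2*m : ℕ) : ZMod (4*k+2)))) (inl (i + ((2*m+1 : ℕ) : ZMod (4*k+2))))) :=
            add_le_add (edist_vv hk i m) SimpleGraph.edist_triangle
        _ ≤ (m : ℕ∞) + (1 + 1) := by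
            refine add_le_add le_rfl (add_le_add (edist_sym ▸ edist_le_one (adj_uv _)) ?_)
            rw [key2]; exact edist_le_one (adj_uu _)
        _ = (m : ℕ∞) + 2 := by ring
    exact ⟨le_trans hA (by exact_mod_cast (show (m:ℕ)+3 ≤ k+3 by omega)),
      le_trans hB (by exact_mod_cast (show (m:ℕ)+2 ≤ k+2 by omega)),
      le_trans hC (by exact_mod_cast (show (m:ℕ)+3 ≤ k+3 by omega)),
      le_trans hD (by exact_mod_cast (show (m:ℕ)+2 ≤ k+2 by omega))⟩


lemma split (i j : ZMod (4*k+2)) :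
    (∃ r : ℕ, r ≤ 2*k+1 ∧ j = i + (r : ZMod (4*k+2))) ∨
    (∃ r : ℕ, r ≤ 2*k+1 ∧ i = j + (r : ZMod (4*k+2))) := by
  have hji : j = i + (((j-i).val : ℕ) : ZMod (4*k+2)) := by
    rw [ZMod.natCast_val, ZMod.cast_id]; ring
  have hij : i = j + (((i-j).val : ℕ) : ZMod (4*k+2)) := by
    rw [ZMod.natCast_val, ZMod.cast_id]; ring
  by_cases h : (j - i).val ≤ 2*k+1
  · exact Or.inl ⟨_, h, hji⟩
  · right
    refine ⟨(i-j).val, ?_, hij⟩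
    have h0 : (j - i) + (i - j) = 0 := by ring
    have hadd := ZMod.val_add (j-i) (i-j)
    rw [h0, ZMod.val_zero] at hadd
    have hv1 : (j - i).val < 4*k+2 := ZMod.val_lt _
    have hv2 : (i - j).val < 4*k+2 := ZMod.val_lt _
    rcases Nat.lt_or_ge ((j-i).val + (i-j).val) (4*k+2) with hlt | hge
    · rw [Nat.mod_eq_of_lt hlt] at hadd; omega
    · rw [Nat.mod_eq_sub_mod hge, Nat.mod_eq_of_lt (by omega)] at hadd; omega

lemma edist_le_main (hk : 2 ≤ k) (x y : ZMod (4*k+2) ⊕ ZMod (4*k+2)) :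
    (GP (4*k+2) 2).edist x y ≤ ((k+3 : ℕ) : ℕ∞) := by
  have cast23 : ((k+2:ℕ) : ℕ∞) ≤ ((k+3:ℕ) : ℕ∞) := by
    exact_mod_cast (show k+2 ≤ k+3 by omega)
  rcases x with i | i <;> rcases y with j | j <;>
    rcases split i j with ⟨r, hr, rfl⟩ | ⟨r, hr, rfl⟩
  · exact (helper hk i r hr).1
  · rw [edist_sym]; exact (helper hk j r hr).1
  · exact le_trans (helper hk i r hr).2.1 cast23
  · rw [edist_sym]; exact le_trans (helper hk j r hr).2.2.2 cast23
  · exact le_trans (helper hk i r hr).2.2.2 cast23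
  · rw [edist_sym]; exact le_trans (helper hk j r hr).2.1 cast23
  · exact (helper hk i r hr).2.2.1
  · rw [edist_sym]; exact (helper hk j r hr).2.2.1


/-- circular distance from 0 -/
def cd (k : ℕ) (d : ZMod (4*k+2)) : ℕ := min d.val (4*k+2 - d.val)

def fU (c : ℕ) : ℕ := min c (c/2 + 2 + c % 2)
def gU (c : ℕ) : ℕ := c/2 + 1 + c % 2
def hV (c : ℕ) : ℕ := c/2 + 3 * (c % 2)

lemma cd_add_one (d : ZMod (4*k+2)) :
    cd k (d+1) ≤ cd k d + 1 ∧ cd k d ≤ cd k (d+1) + 1 := by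
  have hv : d.val < 4*k+2 := ZMod.val_lt d
  have h1 : (1 : ZMod (4*k+2)).val = 1 := ZMod.val_one _
  have hadd : (d+1).val = (d.val + 1) % (4*k+2) := by rw [ZMod.val_add, h1]
  rcases Nat.lt_or_ge (d.val + 1) (4*k+2) with h | h
  · rw [Nat.mod_eq_of_lt h] at hadd
    unfold cd; omega
  · have he : d.val + 1 = 4*k+2 := by omega
    rw [he, Nat.mod_self] at hadd
    unfold cd; omega

lemma cd_add_two (hk : 2 ≤ k) (d : ZMod (4*k+2)) :
    cd k (d+2) ≤ cd k d + 2 ∧ cd k d ≤ cd k (d+2) + 2 ∧ cd k (d+2) % 2 = cd k d % 2 := by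
  have hv : d.val < 4*k+2 := ZMod.val_lt d
  have h2 : (2 : ZMod (4*k+2)).val = 2 := by
    have : ((2:ℕ) : ZMod (4*k+2)).val = 2 := ZMod.val_cast_of_lt (by omega)
    simpa using this
  have hadd : (d+2).val = (d.val + 2) % (4*k+2) := by rw [ZMod.val_add, h2]
  rcases Nat.lt_or_ge (d.val + 2) (4*k+2) with h | h
  · rw [Nat.mod_eq_of_lt h] at hadd
    unfold cd; omega
  · rcases Nat.lt_or_ge (d.val + 2) (4*k+3) with h' | h'
    · have he : d.val + 2 = 4*k+2 := by omega
      rw [he, Nat.mod_self] at hadd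
      unfold cd; omega
    · have he : d.val + 2 = (4*k+2) + 1 := by omega
      rw [he, Nat.add_mod_left, Nat.mod_eq_of_lt (by omega)] at hadd
      unfold cd; omega

lemma fU_lip {a b : ℕ} (h1 : a ≤ b+1) (h2 : b ≤ a+1) : fU a ≤ fU b + 1 := by
  unfold fU; omega

lemma gU_lip {a b : ℕ} (h1 : a ≤ b+2) (h2 : b ≤ a+2) : gU a ≤ gU b + 1 := by
  unfold gU; omega

lemma hV_lip {a b : ℕ} (h1 : a ≤ b+2) (h2 : b ≤ a+2) (h3 : a % 2 = b % 2) :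
    hV a ≤ hV b + 1 := by
  unfold hV; omega

lemma fg_close (a : ℕ) : fU a ≤ gU a + 1 ∧ gU a ≤ fU a + 1 := by
  unfold fU gU; omega

lemma gh_close (a : ℕ) : gU a ≤ hV a + 1 ∧ hV a ≤ gU a + 1 := by
  unfold gU hV; omega

/-- potential for lower bound from `inl a` -/
def phiU (k : ℕ) (a : ZMod (4*k+2)) : (ZMod (4*k+2) ⊕ ZMod (4*k+2)) → ℕ
  | inl j => fU (cd k (j - a))
  | inr j => gU (cd k (j - a))

/-- potential for lower bound from `inr a` -/
def phiV (k : ℕ) (a : ZMod (4*k+2)) : (ZMod (4*k+2) ⊕ ZMod (4*k+2)) → ℕ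
  | inl j => gU (cd k (j - a))
  | inr j => hV (cd k (j - a))

lemma phiU_lip (hk : 2 ≤ k) (a : ZMod (4*k+2)) :
    ∀ x y, (GP (4*k+2) 2).Adj x y → phiU k a y ≤ phiU k a x + 1 := by
  rintro (i|i) (j|j) h
  · obtain ⟨hne, h | h⟩ := h
    · subst h
      have e : i + 1 - a = (i - a) + 1 := by ring
      simp only [phiU, e]
      exact fU_lip (cd_add_one (i-a)).1 (cd_add_one (i-a)).2
    · subst h
      have e : j + 1 - a = (j - a) + 1 := by ring
      simp only [phiU, e]
      exact fU_lip (cd_add_one (j-a)).2 (cd_add_one (j-a)).1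
  · obtain rfl : i = j := h
    simp only [phiU]
    exact (fg_close _).2
  · obtain rfl : i = j := h
    simp only [phiU]
    exact (fg_close _).1
  · obtain ⟨hne, h | h⟩ := h <;> rw [show ((2:ℕ) : ZMod (4*k+2)) = 2 by norm_num] at h
    · subst h
      have e : i + 2 - a = (i - a) + 2 := by ring
      simp only [phiU, e]
      exact gU_lip (cd_add_two hk (i-a)).1 (cd_add_two hk (i-a)).2.1
    · subst h
      have e : j + 2 - a = (j - a) + 2 := by ring
      simp only [phiU, e]
      exact gU_lip (cd_add_two hk (j-a)).2.1 (cd_add_two hk (j-a)).1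

lemma phiV_lip (hk : 2 ≤ k) (a : ZMod (4*k+2)) :
    ∀ x y, (GP (4*k+2) 2).Adj x y → phiV k a y ≤ phiV k a x + 1 := by
  rintro (i|i) (j|j) h
  · obtain ⟨hne, h | h⟩ := h
    · subst h
      have e : i + 1 - a = (i - a) + 1 := by ring
      simp only [phiV, e]
      exact gU_lip (by have := (cd_add_one (i-a)).1; omega)
        (by have := (cd_add_one (i-a)).2; omega)
    · subst h
      have e : j + 1 - a = (j - a) + 1 := by ring
      simp only [phiV, e]
      exact gU_lip (by have := (cd_add_one (j-a)).2; omega)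
        (by have := (cd_add_one (j-a)).1; omega)
  · obtain rfl : i = j := h
    simp only [phiV]
    exact (gh_close _).2
  · obtain rfl : i = j := h
    simp only [phiV]
    exact (gh_close _).1
  · obtain ⟨hne, h | h⟩ := h <;> rw [show ((2:ℕ) : ZMod (4*k+2)) = 2 by norm_num] at h
    · subst h
      have e : i + 2 - a = (i - a) + 2 := by ring
      simp only [phiV, e]
      exact hV_lip (cd_add_two hk (i-a)).1 (cd_add_two hk (i-a)).2.1
        (cd_add_two hk (i-a)).2.2
    · subst h
      have e : j + 2 - a = (j - a) + 2 := by ring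
      simp only [phiV, e]
      exact hV_lip (cd_add_two hk (j-a)).2.1 (cd_add_two hk (j-a)).1
        (cd_add_two hk (j-a)).2.2.symm


lemma lip_walk {φ : ZMod (4*k+2) ⊕ ZMod (4*k+2) → ℕ}
    (hφ : ∀ x y, (GP (4*k+2) 2).Adj x y → φ y ≤ φ x + 1) :
    ∀ {x y : ZMod (4*k+2) ⊕ ZMod (4*k+2)} (w : (GP (4*k+2) 2).Walk x y),
      φ y ≤ φ x + w.length := by
  intro x y w
  induction w with
  | nil => simp
  | @cons u v w h p ih =>
    have := hφ _ _ h
    simp only [SimpleGraph.Walk.length_cons]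
    omega

lemma pair_generic (hk : 2 ≤ k) {x y : ZMod (4*k+2) ⊕ ZMod (4*k+2)}
    (φ : ZMod (4*k+2) ⊕ ZMod (4*k+2) → ℕ)
    (hφ : ∀ x y, (GP (4*k+2) 2).Adj x y → φ y ≤ φ x + 1)
    (hub : (GP (4*k+2) 2).edist x y ≤ ((k+3 : ℕ) : ℕ∞))
    (hx : φ x = 0) (hy : φ y = k + 3) :
    (GP (4*k+2) 2).dist x y = k + 3 := by
  have hne : (GP (4*k+2) 2).edist x y ≠ ⊤ :=
    ne_top_of_le_ne_top (ENat.coe_ne_top _) hub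
  have hreach := SimpleGraph.reachable_of_edist_ne_top hne
  have hd : (GP (4*k+2) 2).dist x y = ((GP (4*k+2) 2).edist x y).toNat := rfl
  have hup : (GP (4*k+2) 2).dist x y ≤ k + 3 := by
    rw [hd]
    have := ENat.toNat_le_toNat hub (ENat.coe_ne_top _)
    rw [ENat.toNat_coe] at this; exact this
  obtain ⟨w, hw⟩ := hreach.exists_walk_length_eq_dist
  have hlow := lip_walk hφ w
  rw [hw, hx, hy] at hlow
  omega

lemma pair_u (hk : 2 ≤ k) (a : ZMod (4*k+2)) :
    (GP (4*k+2) 2).dist (inl a) (inl (a + ((2*k+1 : ℕ) : ZMod (4*k+2)))) = k + 3 := by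
  apply pair_generic hk (phiU k a) (phiU_lip hk a) (helper hk a (2*k+1) le_rfl).1
  · simp only [phiU, sub_self]
    unfold cd fU
    rw [ZMod.val_zero]
    omega
  · simp only [phiU, add_sub_cancel_left]
    have hval : ((2*k+1 : ℕ) : ZMod (4*k+2)).val = 2*k+1 := ZMod.val_cast_of_lt (by omega)
    unfold cd fU
    rw [hval]
    omega

lemma pair_v (hk : 2 ≤ k) (a : ZMod (4*k+2)) :
    (GP (4*k+2) 2).dist (inr a) (inr (a + ((2*k+1 : ℕ) : ZMod (4*k+2)))) = k + 3 := by
  apply pair_generic hk (phiV k a) (phiV_lip hk a) (helper hk a (2*k+1) le_rfl).2.2.1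
  · simp only [phiV, sub_self]
    unfold cd hV
    rw [ZMod.val_zero]
    omega
  · simp only [phiV, add_sub_cancel_left]
    have hval : ((2*k+1 : ℕ) : ZMod (4*k+2)).val = 2*k+1 := ZMod.val_cast_of_lt (by omega)
    unfold cd hV
    rw [hval]
    omega

lemma diam_eq (hk : 2 ≤ k) : (GP (4*k+2) 2).diam = k + 3 := by
  have hediam : (GP (4*k+2) 2).ediam ≤ ((k+3 : ℕ) : ℕ∞) :=
    SimpleGraph.ediam_le_of_edist_le (fun u v => edist_le_main hk u v)
  have hne : (GP (4*k+2) 2).ediam ≠ ⊤ := ne_top_of_le_ne_top (ENat.coe_ne_top _) hediam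
  have h1 : (GP (4*k+2) 2).diam ≤ k + 3 := by
    have hd : (GP (4*k+2) 2).diam = ((GP (4*k+2) 2).ediam).toNat := rfl
    rw [hd]
    have := ENat.toNat_le_toNat hediam (ENat.coe_ne_top _)
    rw [ENat.toNat_coe] at this; exact this
  have h2 : k + 3 ≤ (GP (4*k+2) 2).diam := by
    have hle := SimpleGraph.dist_le_diam hne
      (u := (inl 0 : ZMod (4*k+2) ⊕ ZMod (4*k+2))) (v := inl ((2*k+1 : ℕ) : ZMod (4*k+2)))
    rw [show (inl ((2*k+1 : ℕ) : ZMod (4*k+2)) : ZMod (4*k+2) ⊕ ZMod (4*k+2)) =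
      inl ((0 : ZMod (4*k+2)) + ((2*k+1 : ℕ) : ZMod (4*k+2))) by rw [zero_add],
      pair_u hk 0] at hle
    exact hle
  omega

theorem final (k : ℕ) (hk : 2 ≤ k) :
    (∀ i : ℕ, i ≤ 2*k →
      (GP (4*k+2) 2).dist (Sum.inl ((i : ℕ) : ZMod (4*k+2)))
        (Sum.inl ((i + 2*k + 1 : ℕ) : ZMod (4*k+2))) = k + 3 ∧
      (GP (4*k+2) 2).dist (Sum.inr ((i : ℕ) : ZMod (4*k+2)))
        (Sum.inr ((i + 2*k + 1 : ℕ) : ZMod (4*k+2))) = k + 3) ∧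
    (GP (4*k+2) 2).diam = k + 3 := by
  refine ⟨fun i _ => ?_, diam_eq hk⟩
  have hcast : ((i + 2*k + 1 : ℕ) : ZMod (4*k+2)) =
      ((i : ℕ) : ZMod (4*k+2)) + ((2*k+1 : ℕ) : ZMod (4*k+2)) := by
    push_cast; ring
  rw [hcast]
  exact ⟨pair_u hk _, pair_v hk _⟩



end GP4

/-- In `GP (4k+2) 2` with `k ≥ 2`: `d(uᵢ, u_{i+2k+1}) = d(vᵢ, v_{i+2k+1}) = k+3` for
`0 ≤ i ≤ 2k`, and this equals the diameter. -/
theorem stmt_4 (k : ℕ) (hk : 2 ≤ k) :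
    (∀ i : ℕ, i ≤ 2*k →
      (GP (4*k+2) 2).dist (Sum.inl ((i : ℕ) : ZMod (4*k+2)))
        (Sum.inl ((i + 2*k + 1 : ℕ) : ZMod (4*k+2))) = k + 3 ∧
      (GP (4*k+2) 2).dist (Sum.inr ((i : ℕ) : ZMod (4*k+2)))
        (Sum.inr ((i + 2*k + 1 : ℕ) : ZMod (4*k+2))) = k + 3) ∧
    (GP (4*k+2) 2).diam = k + 3 :=
  GP4.final k hk
end

section
/- For every k ≥ 2, any strong resolving set of the generalized Petersen graph GP(4k+2, 2) has cardinality at least 4k+2. -/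
namespace GPAux

set_option linter.unusedSectionVars false

section
variable {n : ℕ}

lemma cast_ne_cast {a b : ℕ} (ha : a < n) (hb : b < n) (hab : a ≠ b) :
    (a : ZMod n) ≠ (b : ZMod n) := by
  intro h
  have := congrArg ZMod.val h
  rw [ZMod.val_cast_of_lt ha, ZMod.val_cast_of_lt hb] at this; exact hab this

lemma adj_outer (hn : 1 < n) (i : ZMod n) : (GP n 2).Adj (Sum.inl i) (Sum.inl (i+1)) := by
  refine ⟨fun h => ?_, Or.inl rfl⟩
  have h1 : (1 : ZMod n) = 0 := by linear_combination -h
  exact cast_ne_cast (a := 1) (b := 0) hn (by omega) (by omega) (by exact_mod_cast h1)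

lemma adj_spoke (i : ZMod n) : (GP n 2).Adj (Sum.inl i) (Sum.inr i) := by
  show i = i; rfl

lemma adj_inner (hn : 2 < n) (i : ZMod n) : (GP n 2).Adj (Sum.inr i) (Sum.inr (i+2)) := by
  refine ⟨fun h => ?_, Or.inl (by norm_num)⟩
  have h1 : (2 : ZMod n) = 0 := by linear_combination -h
  exact cast_ne_cast (a := 2) (b := 0) hn (by omega) (by omega) (by exact_mod_cast h1)

lemma adj_inl_cases {a : ZMod n} {w : ZMod n ⊕ ZMod n} (h : (GP n 2).Adj (Sum.inl a) w) :
    w = Sum.inl (a + 1) ∨ w = Sum.inl (a - 1) ∨ w = Sum.inr a := by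
  rcases w with j | j
  · obtain ⟨h1, h2 | h2⟩ : a ≠ j ∧ (j = a + 1 ∨ a = j + 1) := h
    · exact Or.inl (by rw [h2])
    · refine Or.inr (Or.inl ?_)
      rw [show j = a - 1 by rw [h2]; ring]
  · have : a = j := h
    exact Or.inr (Or.inr (by rw [this]))

lemma adj_inr_cases {a : ZMod n} {w : ZMod n ⊕ ZMod n} (h : (GP n 2).Adj (Sum.inr a) w) :
    w = Sum.inr (a + 2) ∨ w = Sum.inr (a - 2) ∨ w = Sum.inl a := by
  rcases w with j | j
  · have : a = j := h
    exact Or.inr (Or.inr (by rw [this]))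
  · obtain ⟨h1, h2 | h2⟩ : a ≠ j ∧ (j = a + (2:ZMod n) ∨ a = j + (2:ZMod n)) := by
      have := h; simpa [GP] using this
    · exact Or.inl (by rw [h2])
    · refine Or.inr (Or.inl ?_)
      rw [show j = a - 2 by rw [h2]; ring]

lemma GP_connected (hn : 2 < n) : (GP n 2).Connected := by
  haveI : NeZero n := ⟨by omega⟩
  rw [SimpleGraph.connected_iff]
  refine ⟨?_, ⟨Sum.inl 0⟩⟩
  have key : ∀ m : ℕ, (GP n 2).Reachable (Sum.inl 0) (Sum.inl (m : ZMod n)) := by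
    intro m
    induction m with
    | zero => simpa using SimpleGraph.Reachable.refl _
    | succ m ih => exact ih.trans (SimpleGraph.Adj.reachable (by push_cast; exact adj_outer (by omega) _))
  have keyl : ∀ i : ZMod n, (GP n 2).Reachable (Sum.inl 0) (Sum.inl i) := by
    intro i
    have : ((i.val : ℕ) : ZMod n) = i := ZMod.natCast_val i |>.trans (ZMod.cast_id _ _)
    simpa [this] using key i.val
  intro x y
  have hx : ∀ z : ZMod n ⊕ ZMod n, (GP n 2).Reachable (Sum.inl 0) z := by
    rintro (i|i)
    · exact keyl i
    · exact (keyl i).trans (SimpleGraph.Adj.reachable (adj_spoke i))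
  exact (hx x).symm.trans (hx y)

/-- rotation map -/
def rot (t : ZMod n) : ZMod n ⊕ ZMod n → ZMod n ⊕ ZMod n :=
  Sum.map (· + t) (· + t)

lemma rot_adj {m : ℕ} (t : ZMod n) {x y : ZMod n ⊕ ZMod n} (h : (GP n m).Adj x y) :
    (GP n m).Adj (rot t x) (rot t y) := by
  rcases x with i | i <;> rcases y with j | j <;>
    simp only [GP, rot, Sum.map_inl, Sum.map_inr] at h ⊢
  · obtain ⟨h1, h2⟩ := h
    refine ⟨by simpa using h1, ?_⟩
    rcases h2 with h2 | h2
    · exact Or.inl (by rw [h2]; ring)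
    · exact Or.inr (by rw [h2]; ring)
  · rw [h]
  · rw [h]
  · obtain ⟨h1, h2⟩ := h
    refine ⟨by simpa using h1, ?_⟩
    rcases h2 with h2 | h2
    · exact Or.inl (by rw [h2]; ring)
    · exact Or.inr (by rw [h2]; ring)

def rotHom {m : ℕ} (t : ZMod n) : GP n m →g GP n m := ⟨rot t, rot_adj t⟩

lemma rot_rot (t : ZMod n) (x : ZMod n ⊕ ZMod n) : rot (-t) (rot t x) = x := by
  rcases x with i | i <;> simp [rot]

lemma rot_rot' (t : ZMod n) (x : ZMod n ⊕ ZMod n) : rot t (rot (-t) x) = x := by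
  rcases x with i | i <;> simp [rot]

lemma rot_dist {m : ℕ} (hc : (GP n m).Connected) (t : ZMod n) (x y : ZMod n ⊕ ZMod n) :
    (GP n m).dist (rot t x) (rot t y) = (GP n m).dist x y := by
  have key : ∀ (s : ZMod n) (a b : ZMod n ⊕ ZMod n),
      (GP n m).dist (rot s a) (rot s b) ≤ (GP n m).dist a b := by
    intro s a b
    obtain ⟨p, hp⟩ := hc.exists_walk_length_eq_dist a b
    calc (GP n m).dist (rot s a) (rot s b) ≤ (p.map (rotHom s)).length := SimpleGraph.dist_le _
    _ = (GP n m).dist a b := by rw [SimpleGraph.Walk.length_map, hp]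
  refine le_antisymm (key t x y) ?_
  have := key (-t) (rot t x) (rot t y)
  rwa [rot_rot, rot_rot] at this

lemma mmd_rot {m : ℕ} (hc : (GP n m).Connected) (t : ZMod n) {x y : ZMod n ⊕ ZMod n}
    (h : MutuallyMaximallyDistant (GP n m) x y) :
    MutuallyMaximallyDistant (GP n m) (rot t x) (rot t y) := by
  obtain ⟨hne, h1, h2⟩ := h
  refine ⟨fun e => hne ?_, fun w hw => ?_, fun w hw => ?_⟩
  · have := congrArg (rot (-t)) e
    rwa [rot_rot, rot_rot] at this
  · have hw' : (GP n m).Adj x (rot (-t) w) := by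
      have := rot_adj (-t) hw
      rwa [rot_rot] at this
    have := h1 _ hw'
    calc (GP n m).dist w (rot t y)
        = (GP n m).dist (rot t (rot (-t) w)) (rot t y) := by
          rw [rot_rot']
      _ = (GP n m).dist (rot (-t) w) y := rot_dist hc t _ _
      _ ≤ (GP n m).dist x y := this
      _ = (GP n m).dist (rot t x) (rot t y) := (rot_dist hc t x y).symm
  · have hw' : (GP n m).Adj y (rot (-t) w) := by
      have := rot_adj (-t) hw
      rwa [rot_rot] at this
    have := h2 _ hw'
    calc (GP n m).dist (rot t x) w
        = (GP n m).dist (rot t x) (rot t (rot (-t) w)) := by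
          rw [rot_rot']
      _ = (GP n m).dist x (rot (-t) w) := rot_dist hc t _ _
      _ ≤ (GP n m).dist x y := this
      _ = (GP n m).dist (rot t x) (rot t y) := (rot_dist hc t x y).symm

def pos : ZMod n ⊕ ZMod n → ZMod n := Sum.elim id id

lemma walk_inv {x y : ZMod n ⊕ ZMod n} (p : (GP n 2).Walk x y) :
    ∃ (o s t : ℕ) (D : ℤ),
      p.length = o + s + t ∧
      ((D : ZMod n) = pos y - pos x) ∧
      D.natAbs ≤ o + 2*t ∧
      D % 2 = (o : ℤ) % 2 ∧
      (s % 2 = if x.isRight = y.isRight then 0 else 1) ∧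
      (s = 0 → ((x.isRight = true → o = 0) ∧ (x.isRight = false → t = 0))) := by
  induction p with
  | nil => exact ⟨0, 0, 0, 0, by simp [pos]⟩
  | @cons x z y h q ih =>
    obtain ⟨o, s, t, D, hlen, hcast, habs, hpar, hs, hs0⟩ := ih
    rcases x with i | i <;> rcases z with j | j
    · -- outer edge
      obtain ⟨h1, h2⟩ : i ≠ j ∧ (j = i + 1 ∨ i = j + 1) := id h
      have hD : ∃ ε : ℤ, ε.natAbs = 1 ∧ ((ε : ZMod n) = (j : ZMod n) - i) := by
        rcases h2 with h2 | h2
        · exact ⟨1, rfl, by rw [h2]; push_cast; ring⟩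
        · exact ⟨-1, by norm_num, by rw [h2]; push_cast; ring⟩
      obtain ⟨ε, hε1, hε2⟩ := hD
      refine ⟨o+1, s, t, D+ε, by simp [hlen]; omega, ?_, ?_, by omega, by simpa using hs, ?_⟩
      · simp only [pos, Sum.elim_inl, id_eq] at hcast ⊢
        push_cast [hcast, hε2]; ring
      · calc (D+ε).natAbs ≤ D.natAbs + ε.natAbs := Int.natAbs_add_le D ε
          _ ≤ (o+1) + 2*t := by omega
      · intro h0
        refine ⟨by simp, fun _ => ?_⟩
        exact (hs0 h0).2 rfl
    · -- spoke from outer to inner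
      have h2 : i = j := h
      refine ⟨o, s+1, t, D, by simp [hlen]; omega, by simp [pos, hcast, h2], habs, hpar, ?_, by omega⟩
      rcases y with yi | yi <;> simp at hs ⊢ <;> omega
    · -- spoke from inner to outer
      have h2 : i = j := h
      refine ⟨o, s+1, t, D, by simp [hlen]; omega, by simp [pos, hcast, h2], habs, hpar, ?_, by omega⟩
      rcases y with yi | yi <;> simp at hs ⊢ <;> omega
    · -- inner edge
      obtain ⟨h1, h2⟩ : i ≠ j ∧ (j = i + (2 : ZMod n) ∨ i = j + (2:ZMod n)) := by
        have := h; simpa [GP] using this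
      have hD : ∃ ε : ℤ, ε.natAbs = 2 ∧ ((ε : ZMod n) = (j : ZMod n) - i) := by
        rcases h2 with h2 | h2
        · exact ⟨2, rfl, by rw [h2]; push_cast; ring⟩
        · exact ⟨-2, by norm_num, by rw [h2]; push_cast; ring⟩
      obtain ⟨ε, hε1, hε2⟩ := hD
      refine ⟨o, s, t+1, D+ε, by simp [hlen]; omega, ?_, ?_, by omega, by simpa using hs, ?_⟩
      · simp only [pos, Sum.elim_inr, id_eq] at hcast ⊢
        push_cast [hcast, hε2]; ring
      · calc (D+ε).natAbs ≤ D.natAbs + ε.natAbs := Int.natAbs_add_le D ε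
          _ ≤ o + 2*(t+1) := by omega
      · intro h0
        refine ⟨fun _ => (hs0 h0).1 rfl, by simp⟩
end

section
variable {k : ℕ}

lemma lower_u (hk : 2 ≤ k) (hc : (GP (4*k+2) 2).Connected) :
    k+3 ≤ (GP (4*k+2) 2).dist (Sum.inl 0) (Sum.inl ((2*k+1 : ℕ) : ZMod (4*k+2))) := by
  obtain ⟨p, hp⟩ := hc.exists_walk_length_eq_dist (Sum.inl (0 : ZMod (4*k+2)))
    (Sum.inl ((2*k+1 : ℕ) : ZMod (4*k+2)))
  obtain ⟨o, s, t, D, hlen, hcast, habs, hpar, hs, hs0⟩ := walk_inv p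
  rw [hp] at hlen
  simp only [pos, Sum.elim_inl, id_eq, Sum.isRight_inl, reduceIte] at hcast hs hs0
  obtain ⟨c, hcdvd⟩ : ((4*k+2 : ℤ)) ∣ D - (2*k+1) := by
    have := (ZMod.intCast_zmod_eq_zero_iff_dvd (D - (2*k+1)) (4*k+2)).mp
      (by push_cast at hcast ⊢; rw [hcast]; ring)
    exact_mod_cast this
  have hE : D = (2*k+1) + 2*((2*k+1:ℤ)*c) := by linear_combination hcdvd
  have hcase : 0 ≤ (2*k+1:ℤ)*c ∨ (2*k+1:ℤ)*c ≤ -(2*k+1) := by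
    rcases le_or_gt 0 c with h | h
    · exact Or.inl (mul_nonneg (by positivity) h)
    · right; nlinarith
  have hst : s = 0 → t = 0 := fun h0 => (hs0 h0).2 trivial
  omega

lemma lower_v (hk : 2 ≤ k) (hc : (GP (4*k+2) 2).Connected) :
    k+3 ≤ (GP (4*k+2) 2).dist (Sum.inr 0) (Sum.inr ((2*k+1 : ℕ) : ZMod (4*k+2))) := by
  obtain ⟨p, hp⟩ := hc.exists_walk_length_eq_dist (Sum.inr (0 : ZMod (4*k+2)))
    (Sum.inr ((2*k+1 : ℕ) : ZMod (4*k+2)))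
  obtain ⟨o, s, t, D, hlen, hcast, habs, hpar, hs, hs0⟩ := walk_inv p
  rw [hp] at hlen
  simp only [pos, Sum.elim_inr, id_eq, Sum.isRight_inr, reduceIte] at hcast hs hs0
  obtain ⟨c, hcdvd⟩ : ((4*k+2 : ℤ)) ∣ D - (2*k+1) := by
    have := (ZMod.intCast_zmod_eq_zero_iff_dvd (D - (2*k+1)) (4*k+2)).mp
      (by push_cast at hcast ⊢; rw [hcast]; ring)
    exact_mod_cast this
  have hE : D = (2*k+1) + 2*((2*k+1:ℤ)*c) := by linear_combination hcdvd
  have hcase : 0 ≤ (2*k+1:ℤ)*c ∨ (2*k+1:ℤ)*c ≤ -(2*k+1) := by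
    rcases le_or_gt 0 c with h | h
    · exact Or.inl (mul_nonneg (by positivity) h)
    · right; nlinarith
  have hso : s = 0 → o = 0 := fun h0 => (hs0 h0).1 trivial
  omega

end

section
variable {n : ℕ}

lemma dist_le_one {x y : ZMod n ⊕ ZMod n} (h : (GP n 2).Adj x y) :
    (GP n 2).dist x y ≤ 1 := by
  have := SimpleGraph.dist_le (SimpleGraph.Walk.cons h SimpleGraph.Walk.nil)
  simpa using this

lemma tri4 (hc : (GP n 2).Connected) (a b c d : ZMod n ⊕ ZMod n) :
    (GP n 2).dist a d ≤ (GP n 2).dist a b + (GP n 2).dist b c + (GP n 2).dist c d := by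
  have t1 := hc.dist_triangle (u := a) (v := b) (w := d)
  have t2 := hc.dist_triangle (u := b) (v := c) (w := d)
  omega

lemma tri5 (hc : (GP n 2).Connected) (a b c d e : ZMod n ⊕ ZMod n) :
    (GP n 2).dist a e ≤ (GP n 2).dist a b + (GP n 2).dist b c + (GP n 2).dist c d
      + (GP n 2).dist d e := by
  have t1 := hc.dist_triangle (u := a) (v := b) (w := e)
  have t2 := tri4 hc b c d e
  omega

lemma chain (hn : 2 < n) (hc : (GP n 2).Connected) (m : ℕ) (a : ZMod n) :
    (GP n 2).dist (Sum.inr a) (Sum.inr (a + 2*((m:ℕ) : ZMod n))) ≤ m := by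
  induction m with
  | zero => simp
  | succ m ih =>
    have e : a + 2*(((m+1:ℕ)) : ZMod n) = (a + 2*((m:ℕ):ZMod n)) + 2 := by push_cast; ring
    rw [e]
    calc (GP n 2).dist (Sum.inr a) (Sum.inr ((a + 2*((m:ℕ):ZMod n)) + 2))
        ≤ (GP n 2).dist (Sum.inr a) (Sum.inr (a + 2*((m:ℕ):ZMod n)))
          + (GP n 2).dist (Sum.inr (a + 2*((m:ℕ):ZMod n))) (Sum.inr ((a + 2*((m:ℕ):ZMod n)) + 2)) :=
          hc.dist_triangle
      _ ≤ m + 1 := add_le_add ih (dist_le_one (adj_inner hn _))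

lemma chain' (hn : 2 < n) (hc : (GP n 2).Connected) (m : ℕ) {a b : ZMod n}
    (h : a + 2*((m:ℕ) : ZMod n) = b) :
    (GP n 2).dist (Sum.inr a) (Sum.inr b) ≤ m := by
  rw [← h]; exact chain hn hc m a

lemma mmd_mem {V : Type*} {G : SimpleGraph V} (hc : G.Connected) {S : Set V}
    (hS : IsStrongResolvingSet G S) {u v : V} (h : MutuallyMaximallyDistant G u v) :
    u ∈ S ∨ v ∈ S := by
  obtain ⟨hne, h1, h2⟩ := h
  obtain ⟨w, hwS, hres⟩ := hS u v hne
  have huv : 0 < G.dist u v := hc.pos_dist_of_ne hne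
  rcases hres with hd | hd
  · right
    have hwv : w = v := by
      by_contra hwv
      have hvw : 0 < G.dist v w := hc.pos_dist_of_ne (fun e => hwv e.symm)
      obtain ⟨p, hp⟩ := hc.exists_walk_length_eq_dist v w
      cases p with
      | nil => exact hwv rfl
      | @cons _ x _ ha q =>
        have hq := SimpleGraph.dist_le q
        have hlen : q.length + 1 = G.dist v w := by simpa using hp
        have hx : G.dist u x ≤ G.dist u v := h2 x ha
        have htri : G.dist w u ≤ G.dist w x + G.dist x u := hc.dist_triangle
        have c1 : G.dist w v = G.dist v w := SimpleGraph.dist_comm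
        have c2 : G.dist w x = G.dist x w := SimpleGraph.dist_comm
        have c3 : G.dist x u = G.dist u x := SimpleGraph.dist_comm
        have c4 : G.dist v u = G.dist u v := SimpleGraph.dist_comm
        have hxw : G.dist x w ≤ q.length := hq
        omega
    exact hwv ▸ hwS
  · left
    have hwu : w = u := by
      by_contra hwu
      have hvw : 0 < G.dist u w := hc.pos_dist_of_ne (fun e => hwu e.symm)
      obtain ⟨p, hp⟩ := hc.exists_walk_length_eq_dist u w
      cases p with
      | nil => exact hwu rfl
      | @cons _ x _ ha q =>
        have hq := SimpleGraph.dist_le q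
        have hlen : q.length + 1 = G.dist u w := by simpa using hp
        have hx : G.dist x v ≤ G.dist u v := h1 x ha
        have htri : G.dist w v ≤ G.dist w x + G.dist x v := hc.dist_triangle
        have c1 : G.dist w u = G.dist u w := SimpleGraph.dist_comm
        have c2 : G.dist w x = G.dist x w := SimpleGraph.dist_comm
        have c4 : G.dist u v = G.dist v u := SimpleGraph.dist_comm
        have hxw : G.dist x w ≤ q.length := hq
        omega
    exact hwu ▸ hwS

end

section
variable {k : ℕ}

lemma mmd_u (hk : 2 ≤ k) (hc : (GP (4*k+2) 2).Connected) :
    MutuallyMaximallyDistant (GP (4*k+2) 2)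
      (Sum.inl (0 : ZMod (4*k+2))) (Sum.inl ((2*k+1:ℕ) : ZMod (4*k+2))) := by
  haveI : NeZero (4*k+2) := ⟨by omega⟩
  have hn2 : 2 < 4*k+2 := by omega
  have h0 : ((4*k+2:ℕ) : ZMod (4*k+2)) = 0 := ZMod.natCast_self _
  have hlow := lower_u hk hc
  set c₀ : ZMod (4*k+2) := ((2*k+1:ℕ):ZMod (4*k+2)) with hc₀
  refine ⟨?_, ?_, ?_⟩
  · intro e
    exact cast_ne_cast (n := 4*k+2) (a := 0) (b := 2*k+1) (by omega) (by omega) (by omega)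
      (by exact_mod_cast Sum.inl.inj e)
  · intro w hw
    refine le_trans ?_ hlow
    rcases adj_inl_cases hw with rfl | rfl | rfl
    · calc (GP (4*k+2) 2).dist (Sum.inl ((0:ZMod (4*k+2))+1)) (Sum.inl c₀)
          ≤ _ + _ + _ := tri4 hc _ (Sum.inr ((0:ZMod (4*k+2))+1)) (Sum.inr c₀) _
        _ ≤ 1 + k + 1 := by
            refine add_le_add (add_le_add (dist_le_one (adj_spoke _))
              (chain' hn2 hc k (by rw [hc₀]; push_cast; ring))) ?_
            rw [SimpleGraph.dist_comm]; exact dist_le_one (adj_spoke _)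
        _ ≤ k + 3 := by omega
    · calc (GP (4*k+2) 2).dist (Sum.inl ((0:ZMod (4*k+2))-1)) (Sum.inl c₀)
          ≤ _ + _ + _ := tri4 hc _ (Sum.inr ((0:ZMod (4*k+2))-1)) (Sum.inr c₀) _
        _ ≤ 1 + (k+1) + 1 := by
            refine add_le_add (add_le_add (dist_le_one (adj_spoke _))
              (chain' hn2 hc (k+1) (by rw [hc₀]; push_cast; ring))) ?_
            rw [SimpleGraph.dist_comm]; exact dist_le_one (adj_spoke _)
        _ ≤ k + 3 := by omega
    · calc (GP (4*k+2) 2).dist (Sum.inr (0:ZMod (4*k+2))) (Sum.inl c₀)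
          ≤ _ + _ + _ := tri4 hc _ (Sum.inr ((0:ZMod (4*k+2)) + 2*((k:ℕ):ZMod (4*k+2))))
            (Sum.inl ((0:ZMod (4*k+2)) + 2*((k:ℕ):ZMod (4*k+2)))) _
        _ ≤ k + 1 + 1 := by
            refine add_le_add (add_le_add (chain' hn2 hc k rfl) ?_) ?_
            · rw [SimpleGraph.dist_comm]; exact dist_le_one (adj_spoke _)
            · have : c₀ = ((0:ZMod (4*k+2)) + 2*((k:ℕ):ZMod (4*k+2))) + 1 := by
                rw [hc₀]; push_cast; ring
              rw [this]; exact dist_le_one (adj_outer (by omega) _)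
        _ ≤ k + 3 := by omega
  · intro w hw
    refine le_trans ?_ hlow
    rcases adj_inl_cases hw with rfl | rfl | rfl
    · calc (GP (4*k+2) 2).dist (Sum.inl (0:ZMod (4*k+2))) (Sum.inl (c₀+1))
          ≤ _ + _ + _ := tri4 hc _ (Sum.inr (0:ZMod (4*k+2))) (Sum.inr (c₀+1)) _
        _ ≤ 1 + (k+1) + 1 := by
            refine add_le_add (add_le_add (dist_le_one (adj_spoke _))
              (chain' hn2 hc (k+1) (by rw [hc₀]; push_cast; ring))) ?_
            rw [SimpleGraph.dist_comm]; exact dist_le_one (adj_spoke _)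
        _ ≤ k + 3 := by omega
    · calc (GP (4*k+2) 2).dist (Sum.inl (0:ZMod (4*k+2))) (Sum.inl (c₀-1))
          ≤ _ + _ + _ := tri4 hc _ (Sum.inr (0:ZMod (4*k+2))) (Sum.inr (c₀-1)) _
        _ ≤ 1 + k + 1 := by
            refine add_le_add (add_le_add (dist_le_one (adj_spoke _))
              (chain' hn2 hc k (by rw [hc₀]; push_cast; ring))) ?_
            rw [SimpleGraph.dist_comm]; exact dist_le_one (adj_spoke _)
        _ ≤ k + 3 := by omega
    · calc (GP (4*k+2) 2).dist (Sum.inl (0:ZMod (4*k+2))) (Sum.inr c₀)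
          ≤ _ + _ + _ := tri4 hc _ (Sum.inl ((0:ZMod (4*k+2))+1)) (Sum.inr ((0:ZMod (4*k+2))+1)) _
        _ ≤ 1 + 1 + k := by
            exact add_le_add (add_le_add (dist_le_one (adj_outer (by omega) _))
              (dist_le_one (adj_spoke _)))
              (chain' hn2 hc k (by rw [hc₀]; push_cast; ring))
        _ ≤ k + 3 := by omega

lemma mmd_v (hk : 2 ≤ k) (hc : (GP (4*k+2) 2).Connected) :
    MutuallyMaximallyDistant (GP (4*k+2) 2)
      (Sum.inr (0 : ZMod (4*k+2))) (Sum.inr ((2*k+1:ℕ) : ZMod (4*k+2))) := by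
  haveI : NeZero (4*k+2) := ⟨by omega⟩
  have hn2 : 2 < 4*k+2 := by omega
  have h0 : (4*(k:ZMod (4*k+2))+2) = 0 := by
    have := ZMod.natCast_self (4*k+2)
    push_cast at this
    exact this
  have hk1 : (1:ℕ) ≤ k := by omega
  have hlow := lower_v hk hc
  set c₀ : ZMod (4*k+2) := ((2*k+1:ℕ):ZMod (4*k+2)) with hc₀
  refine ⟨?_, ?_, ?_⟩
  · intro e
    exact cast_ne_cast (n := 4*k+2) (a := 0) (b := 2*k+1) (by omega) (by omega) (by omega)
      (by exact_mod_cast Sum.inr.inj e)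
  · intro w hw
    refine le_trans ?_ hlow
    rcases adj_inr_cases hw with rfl | rfl | rfl
    · -- neighbor inr (0+2)
      calc (GP (4*k+2) 2).dist (Sum.inr ((0:ZMod (4*k+2))+2)) (Sum.inr c₀)
          ≤ _ + _ + _ + _ := tri5 hc _
            (Sum.inr ((0:ZMod (4*k+2))+2 + 2*(((k-1:ℕ)):ZMod (4*k+2))))
            (Sum.inl ((0:ZMod (4*k+2))+2 + 2*(((k-1:ℕ)):ZMod (4*k+2))))
            (Sum.inl (((0:ZMod (4*k+2))+2 + 2*(((k-1:ℕ)):ZMod (4*k+2)))+1)) _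
        _ ≤ (k-1) + 1 + 1 + 1 := by
            refine add_le_add (add_le_add (add_le_add (chain' hn2 hc (k-1) rfl) ?_)
              (dist_le_one (adj_outer (by omega) _))) ?_
            · rw [SimpleGraph.dist_comm]; exact dist_le_one (adj_spoke _)
            · have : c₀ = ((0:ZMod (4*k+2))+2 + 2*(((k-1:ℕ)):ZMod (4*k+2)))+1 := by
                rw [hc₀]; push_cast [Nat.cast_sub hk1]; ring
              rw [this]; exact dist_le_one (adj_spoke _)
        _ ≤ k + 3 := by omega
    · -- neighbor inr (0-2)
      calc (GP (4*k+2) 2).dist (Sum.inr ((0:ZMod (4*k+2))-2)) (Sum.inr c₀)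
          ≤ _ + _ + _ + _ := tri5 hc _
            (Sum.inl ((0:ZMod (4*k+2))-2)) (Sum.inl (((0:ZMod (4*k+2))-2)+1))
            (Sum.inr (((0:ZMod (4*k+2))-2)+1)) _
        _ ≤ 1 + 1 + 1 + k := by
            refine add_le_add (add_le_add (add_le_add ?_ (dist_le_one (adj_outer (by omega) _)))
              (dist_le_one (adj_spoke _))) ?_
            · rw [SimpleGraph.dist_comm]; exact dist_le_one (adj_spoke _)
            · rw [SimpleGraph.dist_comm]
              refine chain' hn2 hc k ?_
              rw [hc₀]; push_cast; linear_combination h0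
        _ ≤ k + 3 := by omega
    · -- neighbor inl 0
      calc (GP (4*k+2) 2).dist (Sum.inl (0:ZMod (4*k+2))) (Sum.inr c₀)
          ≤ _ + _ + _ := tri4 hc _ (Sum.inl ((0:ZMod (4*k+2))+1)) (Sum.inr ((0:ZMod (4*k+2))+1)) _
        _ ≤ 1 + 1 + k := by
            exact add_le_add (add_le_add (dist_le_one (adj_outer (by omega) _))
              (dist_le_one (adj_spoke _)))
              (chain' hn2 hc k (by rw [hc₀]; push_cast; ring))
        _ ≤ k + 3 := by omega
  · intro w hw
    refine le_trans ?_ hlow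
    rcases adj_inr_cases hw with rfl | rfl | rfl
    · -- neighbor inr (c₀+2)
      rw [SimpleGraph.dist_comm]
      calc (GP (4*k+2) 2).dist (Sum.inr (c₀+2)) (Sum.inr (0:ZMod (4*k+2)))
          ≤ _ + _ + _ + _ := tri5 hc _
            (Sum.inl (c₀+2)) (Sum.inl (c₀+1)) (Sum.inr (c₀+1)) _
        _ ≤ 1 + 1 + 1 + k := by
            refine add_le_add (add_le_add (add_le_add ?_ ?_) (dist_le_one (adj_spoke _))) ?_
            · rw [SimpleGraph.dist_comm]; exact dist_le_one (adj_spoke _)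
            · rw [SimpleGraph.dist_comm]
              have : c₀ + 2 = (c₀ + 1) + 1 := by ring
              rw [this]; exact dist_le_one (adj_outer (by omega) _)
            · refine chain' hn2 hc k ?_
              rw [hc₀]; push_cast; linear_combination h0
        _ ≤ k + 3 := by omega
    · -- neighbor inr (c₀-2)
      calc (GP (4*k+2) 2).dist (Sum.inr (0:ZMod (4*k+2))) (Sum.inr (c₀-2))
          ≤ _ + _ + _ + _ := tri5 hc _
            (Sum.inl (0:ZMod (4*k+2))) (Sum.inl ((0:ZMod (4*k+2))+1))
            (Sum.inr ((0:ZMod (4*k+2))+1)) _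
        _ ≤ 1 + 1 + 1 + (k-1) := by
            refine add_le_add (add_le_add (add_le_add ?_ (dist_le_one (adj_outer (by omega) _)))
              (dist_le_one (adj_spoke _))) ?_
            · rw [SimpleGraph.dist_comm]; exact dist_le_one (adj_spoke _)
            · refine chain' hn2 hc (k-1) ?_
              rw [hc₀]; push_cast [Nat.cast_sub hk1]; ring
        _ ≤ k + 3 := by omega
    · -- neighbor inl c₀
      calc (GP (4*k+2) 2).dist (Sum.inr (0:ZMod (4*k+2))) (Sum.inl c₀)
          ≤ _ + _ + _ := tri4 hc _ (Sum.inr ((0:ZMod (4*k+2)) + 2*((k:ℕ):ZMod (4*k+2))))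
            (Sum.inl ((0:ZMod (4*k+2)) + 2*((k:ℕ):ZMod (4*k+2)))) _
        _ ≤ k + 1 + 1 := by
            refine add_le_add (add_le_add (chain' hn2 hc k rfl) ?_) ?_
            · rw [SimpleGraph.dist_comm]; exact dist_le_one (adj_spoke _)
            · have : c₀ = ((0:ZMod (4*k+2)) + 2*((k:ℕ):ZMod (4*k+2))) + 1 := by
                rw [hc₀]; push_cast; ring
              rw [this]; exact dist_le_one (adj_outer (by omega) _)
        _ ≤ k + 3 := by omega

end
end GPAux


/-- For `k ≥ 2`, any strong resolving set of `GP (4k+2) 2` has at least `4k+2` elements. -/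
theorem stmt_5 (k : ℕ) (hk : 2 ≤ k) (S : Set (ZMod (4*k+2) ⊕ ZMod (4*k+2)))
    (hS : IsStrongResolvingSet (GP (4*k+2) 2) S) : 4*k + 2 ≤ S.ncard := by
  classical
  haveI : NeZero (4*k+2) := ⟨by omega⟩
  have hc : (GP (4*k+2) 2).Connected := GPAux.GP_connected (by omega)
  set c₀ : ZMod (4*k+2) := ((2*k+1:ℕ):ZMod (4*k+2)) with hc₀
  -- every antipodal pair meets S
  have pairU : ∀ j : Fin (2*k+1), ∃ w, w ∈ S ∧
      (w = Sum.inl (((j:ℕ):ZMod (4*k+2))) ∨ w = Sum.inl (((j:ℕ):ZMod (4*k+2)) + c₀)) := by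
    intro j
    have hm := GPAux.mmd_rot hc (((j:ℕ):ZMod (4*k+2))) (GPAux.mmd_u hk hc)
    have e1 : GPAux.rot (((j:ℕ):ZMod (4*k+2))) (Sum.inl (0 : ZMod (4*k+2)))
        = Sum.inl (((j:ℕ):ZMod (4*k+2))) := by simp [GPAux.rot]
    have e2 : GPAux.rot (((j:ℕ):ZMod (4*k+2))) (Sum.inl c₀)
        = Sum.inl (((j:ℕ):ZMod (4*k+2)) + c₀) := by simp [GPAux.rot]; ring
    rw [e1, e2] at hm
    rcases GPAux.mmd_mem hc hS hm with h | h
    · exact ⟨_, h, Or.inl rfl⟩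
    · exact ⟨_, h, Or.inr rfl⟩
  have pairV : ∀ j : Fin (2*k+1), ∃ w, w ∈ S ∧
      (w = Sum.inr (((j:ℕ):ZMod (4*k+2))) ∨ w = Sum.inr (((j:ℕ):ZMod (4*k+2)) + c₀)) := by
    intro j
    have hm := GPAux.mmd_rot hc (((j:ℕ):ZMod (4*k+2))) (GPAux.mmd_v hk hc)
    have e1 : GPAux.rot (((j:ℕ):ZMod (4*k+2))) (Sum.inr (0 : ZMod (4*k+2)))
        = Sum.inr (((j:ℕ):ZMod (4*k+2))) := by simp [GPAux.rot]
    have e2 : GPAux.rot (((j:ℕ):ZMod (4*k+2))) (Sum.inr c₀)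
        = Sum.inr (((j:ℕ):ZMod (4*k+2)) + c₀) := by simp [GPAux.rot]; ring
    rw [e1, e2] at hm
    rcases GPAux.mmd_mem hc hS hm with h | h
    · exact ⟨_, h, Or.inl rfl⟩
    · exact ⟨_, h, Or.inr rfl⟩
  choose fU hUS hU using pairU
  choose fV hVS hV using pairV
  set f : Fin (2*k+1) ⊕ Fin (2*k+1) → ZMod (4*k+2) ⊕ ZMod (4*k+2) := Sum.elim fU fV with hf
  -- recovery map
  have hmodlt : ∀ m : ℕ, m % (2*k+1) < 2*k+1 := fun m => Nat.mod_lt _ (by omega)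
  set r : ZMod (4*k+2) ⊕ ZMod (4*k+2) → Fin (2*k+1) ⊕ Fin (2*k+1) :=
    fun x => match x with
      | Sum.inl i => Sum.inl ⟨i.val % (2*k+1), hmodlt _⟩
      | Sum.inr i => Sum.inr ⟨i.val % (2*k+1), hmodlt _⟩ with hr
  have hval1 : ∀ j : Fin (2*k+1), (((j:ℕ):ZMod (4*k+2))).val % (2*k+1) = (j:ℕ) := by
    intro j
    rw [ZMod.val_cast_of_lt (by omega)]
    exact Nat.mod_eq_of_lt j.2
  have hval2 : ∀ j : Fin (2*k+1), (((j:ℕ):ZMod (4*k+2)) + c₀).val % (2*k+1) = (j:ℕ) := by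
    intro j
    have : ((j:ℕ):ZMod (4*k+2)) + c₀ = (((j:ℕ) + (2*k+1) : ℕ) : ZMod (4*k+2)) := by
      rw [hc₀]; push_cast; ring
    rw [this, ZMod.val_cast_of_lt (by omega), Nat.add_mod_right]
    exact Nat.mod_eq_of_lt j.2
  have hleft : ∀ j, r (f j) = j := by
    rintro (j | j)
    · rcases hU j with h | h <;> simp only [hf, Sum.elim_inl] <;> rw [h] <;>
        simp only [hr] <;> exact congrArg Sum.inl (Fin.ext (by first | exact hval1 j | exact hval2 j))
    · rcases hV j with h | h <;> simp only [hf, Sum.elim_inr] <;> rw [h] <;>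
        simp only [hr] <;> exact congrArg Sum.inr (Fin.ext (by first | exact hval1 j | exact hval2 j))
  have hinj : Function.Injective f := Function.LeftInverse.injective hleft
  have hrange : Set.range f ⊆ S := by
    rintro x ⟨j, rfl⟩
    rcases j with j | j
    · exact hUS j
    · exact hVS j
  have hcard : (Set.range f).ncard = 4*k+2 := by
    rw [← Set.image_univ, Set.ncard_image_of_injective _ hinj, Set.ncard_univ]
    simp only [Nat.card_eq_fintype_card, Fintype.card_sum, Fintype.card_fin]
    omega
  calc 4*k+2 = (Set.range f).ncard := hcard.symm
    _ ≤ S.ncard := Set.ncard_le_ncard hrange S.toFinite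
end

section
/- For every k ≥ 3, the set S = {u_i : 0 ≤ i ≤ 2k−1} ∪ {u_{2k+2i+1} : 0 ≤ i ≤ k−1} ∪ {v_{2i+1} : 0 ≤ i ≤ 2k−1} is a strong resolving set of the generalized Petersen graph GP(4k, 2). -/
open SimpleGraph Sum

def cyc {n : ℕ} (d : ZMod n) : ℕ := min d.val (-d).val

section
variable {k : ℕ}

lemma cyc_neg {n : ℕ} (d : ZMod n) : cyc (-d) = cyc d := by
  unfold cyc; rw [neg_neg]; exact min_comm _ _

lemma cyc_zero {n : ℕ} [NeZero n] : cyc (0 : ZMod n) = 0 := by simp [cyc]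

lemma cyc_le (hk : 3 ≤ k) (d : ZMod (4*k)) : cyc d ≤ 2*k := by
  haveI : NeZero (4*k) := ⟨by omega⟩
  rcases eq_or_ne d 0 with h|h
  · simp [h, cyc]
  · have h1 := ZMod.val_lt d
    have h2 : (-d).val = 4*k - d.val := by rw [ZMod.neg_val]; simp [h]
    unfold cyc; omega

lemma val_one' (hk : 3 ≤ k) : (1 : ZMod (4*k)).val = 1 := by
  haveI : Fact (1 < 4*k) := ⟨by omega⟩; exact ZMod.val_one _

lemma cyc_add_one (hk : 3 ≤ k) (d : ZMod (4*k)) : cyc (d+1) ≤ cyc d + 1 := by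
  haveI : NeZero (4*k) := ⟨by omega⟩
  rcases eq_or_ne (d+1) 0 with h|h
  · simp [h, cyc]
  rcases eq_or_ne d 0 with h0|h0
  · subst h0
    have : cyc (0 + 1 : ZMod (4*k)) ≤ 1 := by
      unfold cyc; rw [zero_add]; exact le_trans (min_le_left _ _) (le_of_eq (val_one' hk))
    omega
  have h1 : d.val < 4*k := ZMod.val_lt d
  have hne : d.val + 1 < 4*k := by
    rcases Nat.lt_or_ge (d.val + 1) (4*k) with h2|h2
    · exact h2
    · exfalso; apply h
      have hd : d.val = 4*k - 1 := by omega
      have : d = ((4*k-1 : ℕ) : ZMod (4*k)) := by rw [← hd, ZMod.natCast_zmod_val]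
      rw [this]
      have h4 : ((4*k-1 : ℕ) : ZMod (4*k)) + 1 = ((4*k-1+1 : ℕ) : ZMod (4*k)) := by
        push_cast; ring
      rw [h4, show 4*k-1+1 = 4*k from by omega, ZMod.natCast_self]
  have hv1 : (d+1).val = d.val + 1 := by
    rw [ZMod.val_add, val_one' hk, Nat.mod_eq_of_lt hne]
  have hv2 : (-(d+1)).val = 4*k - (d.val+1) := by
    rw [ZMod.neg_val]; simp [h, hv1]
  have hv3 : (-d).val = 4*k - d.val := by rw [ZMod.neg_val]; simp [h0]
  unfold cyc; omega

lemma cyc_add_one' (hk : 3 ≤ k) (d : ZMod (4*k)) : cyc d ≤ cyc (d+1) + 1 := by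
  have h := cyc_add_one hk (-(d+1))
  rw [show -(d+1)+1 = -d by ring, cyc_neg, cyc_neg] at h
  exact h

lemma cyc_step1 (hk : 3 ≤ k) {x y : ZMod (4*k)} (h : y = x + 1 ∨ x = y + 1) :
    cyc y ≤ cyc x + 1 ∧ cyc x ≤ cyc y + 1 := by
  rcases h with h|h <;> subst h
  · exact ⟨cyc_add_one hk x, cyc_add_one' hk x⟩
  · exact ⟨cyc_add_one' hk y, cyc_add_one hk y⟩

lemma cyc_step2 (hk : 3 ≤ k) {x y : ZMod (4*k)} (h : y = x + 2 ∨ x = y + 2) :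
    cyc y ≤ cyc x + 2 ∧ cyc x ≤ cyc y + 2 := by
  have two : (2 : ZMod (4*k)) = 1 + 1 := by norm_num
  rcases h with h|h <;> subst h <;>
    rw [two, ← add_assoc] <;>
    constructor
  · exact le_trans (cyc_add_one hk _) (by have := cyc_add_one hk x; omega)
  · exact le_trans (cyc_add_one' hk x) (by have := cyc_add_one' hk (x+1); omega)
  · exact le_trans (cyc_add_one' hk y) (by have := cyc_add_one' hk (y+1); omega)
  · exact le_trans (cyc_add_one hk _) (by have := cyc_add_one hk y; omega)


-- parity of val under +1
lemma val_add_one_parity (hk : 3 ≤ k) (d : ZMod (4*k)) :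
    ((d+1).val + d.val) % 2 = 1 := by
  haveI : NeZero (4*k) := ⟨by omega⟩
  have h1 : (d+1).val = (d.val + 1) % (4*k) := by rw [ZMod.val_add, val_one' hk]
  have h2 : (d.val + 1) % (4*k) % 2 = (d.val + 1) % 2 :=
    Nat.mod_mod_of_dvd _ ⟨2*k, by ring⟩
  omega

lemma val_add_two_parity (hk : 3 ≤ k) (d : ZMod (4*k)) :
    (d+2).val % 2 = d.val % 2 := by
  haveI : NeZero (4*k) := ⟨by omega⟩
  have hv2 : (2 : ZMod (4*k)).val = 2 := by
    have : ((2:ℕ) : ZMod (4*k)).val = 2 := ZMod.val_cast_of_lt (by omega)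
    simpa using this
  have h1 : (d+2).val = (d.val + 2) % (4*k) := by rw [ZMod.val_add, hv2]
  have h2 : (d.val + 2) % (4*k) % 2 = (d.val + 2) % 2 :=
    Nat.mod_mod_of_dvd _ ⟨2*k, by ring⟩
  omega

lemma cyc_parity (hk : 3 ≤ k) (d : ZMod (4*k)) : cyc d % 2 = d.val % 2 := by
  haveI : NeZero (4*k) := ⟨by omega⟩
  rcases eq_or_ne d 0 with h|h
  · simp [h, cyc]
  · have h1 := ZMod.val_lt d
    have h2 : (-d).val = 4*k - d.val := by rw [ZMod.neg_val]; simp [h]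
    unfold cyc; omega

lemma cyc_natCast (hk : 3 ≤ k) {m : ℕ} (hm : m ≤ 2*k) :
    cyc ((m : ℕ) : ZMod (4*k)) = m := by
  haveI : NeZero (4*k) := ⟨by omega⟩
  rcases Nat.eq_zero_or_pos m with h|h
  · subst h; simpa using (cyc_zero : cyc (0 : ZMod (4*k)) = 0)
  have hv : ((m : ℕ) : ZMod (4*k)).val = m := ZMod.val_cast_of_lt (by omega)
  have hne : ((m : ℕ) : ZMod (4*k)) ≠ 0 := by
    intro hc; rw [hc] at hv; simp [ZMod.val_zero] at hv; omega
  have h2 : (-((m:ℕ) : ZMod (4*k))).val = 4*k - m := by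
    rw [ZMod.neg_val]; simp [hne, hv]
  unfold cyc; rw [hv, h2]; omega

lemma neg_cast_val_parity (hk : 3 ≤ k) {m : ℕ} (hm : m ≤ 2*k) :
    (-((m:ℕ) : ZMod (4*k))).val % 2 = m % 2 := by
  haveI : NeZero (4*k) := ⟨by omega⟩
  rcases Nat.eq_zero_or_pos m with h|h
  · subst h; simp
  have hv : ((m : ℕ) : ZMod (4*k)).val = m := ZMod.val_cast_of_lt (by omega)
  have hne : ((m : ℕ) : ZMod (4*k)) ≠ 0 := by
    intro hc; rw [hc] at hv; simp [ZMod.val_zero] at hv; omega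
  rw [ZMod.neg_val]; simp only [hne, if_false, hv]; omega

-- adjacency lemmas
lemma gp_adj_outer (hk : 3 ≤ k) (i : ZMod (4*k)) :
    (GP (4*k) 2).Adj (inl i) (inl (i+1)) := by
  haveI : NeZero (4*k) := ⟨by omega⟩
  refine ⟨?_, Or.inl rfl⟩
  intro h
  have : (1 : ZMod (4*k)) = 0 := by
    have := congrArg (fun z => z - i) h; simpa using this.symm
  have := congrArg ZMod.val this
  rw [val_one' hk, ZMod.val_zero] at this; omega

lemma gp_adj_spoke (i : ZMod (4*k)) : (GP (4*k) 2).Adj (inl i) (inr i) := rfl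

lemma gp_adj_spoke' (i : ZMod (4*k)) : (GP (4*k) 2).Adj (inr i) (inl i) := rfl

lemma gp_adj_inner (hk : 3 ≤ k) (i : ZMod (4*k)) :
    (GP (4*k) 2).Adj (inr i) (inr (i+2)) := by
  haveI : NeZero (4*k) := ⟨by omega⟩
  have h2 : ((2:ℕ) : ZMod (4*k)) = (2 : ZMod (4*k)) := by push_cast; ring
  refine ⟨?_, Or.inl (by rw [h2])⟩
  intro h
  have h0 : (2 : ZMod (4*k)) = 0 := by
    have := congrArg (fun z => z - i) h; simpa using this.symm
  have hv : (2 : ZMod (4*k)).val = 2 := by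
    have : ((2:ℕ) : ZMod (4*k)).val = 2 := ZMod.val_cast_of_lt (by omega)
    rwa [h2] at this
  rw [h0, ZMod.val_zero] at hv; omega

-- connectivity
lemma gp_reach_outer (hk : 3 ≤ k) (i : ZMod (4*k)) (m : ℕ) :
    (GP (4*k) 2).Reachable (inl i) (inl (i + (m : ZMod (4*k)))) := by
  induction m with
  | zero => simp only [Nat.cast_zero, add_zero]; exact Reachable.refl _
  | succ m ih =>
      refine ih.trans (Adj.reachable ?_)
      have : i + ((m+1 : ℕ) : ZMod (4*k)) = (i + (m : ZMod (4*k))) + 1 := by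
        push_cast; ring
      rw [this]
      exact gp_adj_outer hk _

lemma gp_conn (hk : 3 ≤ k) : (GP (4*k) 2).Connected := by
  haveI : NeZero (4*k) := ⟨by omega⟩
  rw [connected_iff]
  have key : ∀ x, (GP (4*k) 2).Reachable (inl 0) x := by
    rintro (i|i)
    · have h := gp_reach_outer hk 0 i.val
      rwa [zero_add, ZMod.natCast_zmod_val] at h
    · have h := gp_reach_outer hk 0 i.val
      rw [zero_add, ZMod.natCast_zmod_val] at h
      exact h.trans (Adj.reachable (gp_adj_spoke i))
  exact ⟨fun x y => (key x).symm.trans (key y), ⟨inl 0⟩⟩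

-- Lipschitz lower bound machinery
lemma lipschitz_le_walk {V : Type*} {G : SimpleGraph V} (f : V → ℕ)
    (hf : ∀ a b, G.Adj a b → f a ≤ f b + 1) {x y : V} (hy : f y = 0)
    (p : G.Walk x y) : f x ≤ p.length := by
  induction p with
  | nil => simp [hy]
  | cons h p ih =>
      have := hf _ _ h
      simp only [Walk.length_cons]; omega

lemma lipschitz_le_dist (hk : 3 ≤ k) (f : ZMod (4*k) ⊕ ZMod (4*k) → ℕ)
    (hf : ∀ a b, (GP (4*k) 2).Adj a b → f a ≤ f b + 1)
    {x y : ZMod (4*k) ⊕ ZMod (4*k)} (hy : f y = 0) :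
    f x ≤ (GP (4*k) 2).dist x y := by
  obtain ⟨p, hp⟩ := (gp_conn hk).exists_walk_length_eq_dist x y
  rw [← hp]; exact lipschitz_le_walk f hf hy p

-- upper bounds
lemma ub_spoke (hk : 3 ≤ k) (i : ZMod (4*k)) : (GP (4*k) 2).dist (inl i) (inr i) ≤ 1 := by
  have := SimpleGraph.dist_le (Walk.cons (gp_adj_spoke i) Walk.nil)
  simpa using this

lemma ub_spoke' (hk : 3 ≤ k) (i : ZMod (4*k)) : (GP (4*k) 2).dist (inr i) (inl i) ≤ 1 := by
  rw [SimpleGraph.dist_comm]; exact ub_spoke hk i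

lemma ub_outer (hk : 3 ≤ k) (i : ZMod (4*k)) (m : ℕ) :
    (GP (4*k) 2).dist (inl i) (inl (i + (m : ZMod (4*k)))) ≤ m := by
  induction m with
  | zero => simp
  | succ m ih =>
      have h1 : i + ((m+1 : ℕ) : ZMod (4*k)) = (i + (m : ZMod (4*k))) + 1 := by
        push_cast; ring
      have h2 := SimpleGraph.dist_le
        (Walk.cons (gp_adj_outer hk (i + (m : ZMod (4*k)))) Walk.nil)
      have h3 := (gp_conn hk).dist_triangle
        (u := inl i) (v := inl (i + (m : ZMod (4*k)))) (w := inl ((i + (m : ZMod (4*k))) + 1))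
      rw [h1]
      simp only [Walk.length_cons, Walk.length_nil] at h2
      omega

lemma ub_inner (hk : 3 ≤ k) (i : ZMod (4*k)) (d : ℕ) :
    (GP (4*k) 2).dist (inr i) (inr (i + ((2*d : ℕ) : ZMod (4*k)))) ≤ d := by
  induction d with
  | zero => simp
  | succ d ih =>
      have h1 : i + ((2*(d+1) : ℕ) : ZMod (4*k)) = (i + ((2*d : ℕ) : ZMod (4*k))) + 2 := by
        push_cast; ring
      have h2 := SimpleGraph.dist_le
        (Walk.cons (gp_adj_inner hk (i + ((2*d : ℕ) : ZMod (4*k)))) Walk.nil)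
      have h3 := (gp_conn hk).dist_triangle
        (u := inr i) (v := inr (i + ((2*d : ℕ) : ZMod (4*k))))
        (w := inr ((i + ((2*d : ℕ) : ZMod (4*k))) + 2))
      rw [h1]
      simp only [Walk.length_cons, Walk.length_nil] at h2
      omega

end

def Fu (k : ℕ) (t : ZMod (4*k)) : ZMod (4*k) ⊕ ZMod (4*k) → ℕ
  | inl a => min (cyc (a - t)) ((cyc (a - t)+1)/2 + 2)
  | inr a => (cyc (a - t)+1)/2 + 1

def Fv (k : ℕ) (t : ZMod (4*k)) : ZMod (4*k) ⊕ ZMod (4*k) → ℕ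
  | inl a => (cyc (a - t)+1)/2 + 1
  | inr a => if (a - t).val % 2 = 0 then cyc (a - t)/2 else (cyc (a - t)+1)/2 + 2

section
variable {k : ℕ}

lemma Fu_lip (hk : 3 ≤ k) (t : ZMod (4*k)) :
    ∀ x y, (GP (4*k) 2).Adj x y → Fu k t x ≤ Fu k t y + 1 := by
  rintro (a|a) (b|b) h
  · have h' : a ≠ b ∧ (b = a + 1 ∨ a = b + 1) := h
    have hor : (b - t) = (a - t) + 1 ∨ (a - t) = (b - t) + 1 := by
      rcases h'.2 with h2|h2
      · left; rw [h2]; ring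
      · right; rw [h2]; ring
    have hs := cyc_step1 hk hor
    simp only [Fu]; omega
  · have h' : a = b := h; subst h'
    simp only [Fu]; omega
  · have h' : a = b := h; subst h'
    simp only [Fu]; omega
  · have h' : a ≠ b ∧ (b = a + ((2:ℕ) : ZMod (4*k)) ∨ a = b + ((2:ℕ):ZMod (4*k))) := h
    have hcast : ((2:ℕ) : ZMod (4*k)) = (2 : ZMod (4*k)) := by push_cast; ring
    have hor : (b - t) = (a - t) + 2 ∨ (a - t) = (b - t) + 2 := by
      rcases h'.2 with h2|h2 <;> rw [hcast] at h2
      · left; rw [h2]; ring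
      · right; rw [h2]; ring
    have hs := cyc_step2 hk hor
    simp only [Fu]; omega

lemma Fv_lip (hk : 3 ≤ k) (t : ZMod (4*k)) :
    ∀ x y, (GP (4*k) 2).Adj x y → Fv k t x ≤ Fv k t y + 1 := by
  haveI : NeZero (4*k) := ⟨by omega⟩
  rintro (a|a) (b|b) h
  · have h' : a ≠ b ∧ (b = a + 1 ∨ a = b + 1) := h
    have hor : (b - t) = (a - t) + 1 ∨ (a - t) = (b - t) + 1 := by
      rcases h'.2 with h2|h2
      · left; rw [h2]; ring
      · right; rw [h2]; ring
    have hs := cyc_step1 hk hor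
    simp only [Fv]; omega
  · have h' : a = b := h; subst h'
    have hp := cyc_parity hk (a - t)
    simp only [Fv]; split_ifs with h1 <;> omega
  · have h' : a = b := h; subst h'
    have hp := cyc_parity hk (a - t)
    simp only [Fv]; split_ifs with h1 <;> omega
  · have h' : a ≠ b ∧ (b = a + ((2:ℕ) : ZMod (4*k)) ∨ a = b + ((2:ℕ):ZMod (4*k))) := h
    have hcast : ((2:ℕ) : ZMod (4*k)) = (2 : ZMod (4*k)) := by push_cast; ring
    have hor : (b - t) = (a - t) + 2 ∨ (a - t) = (b - t) + 2 := by
      rcases h'.2 with h2|h2 <;> rw [hcast] at h2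
      · left; rw [h2]; ring
      · right; rw [h2]; ring
    have hs := cyc_step2 hk hor
    have hpar : (b - t).val % 2 = (a - t).val % 2 := by
      rcases hor with h2|h2
      · rw [h2]; exact val_add_two_parity hk (a - t)
      · rw [h2]; exact (val_add_two_parity hk (b - t)).symm
    have hpa := cyc_parity hk (a - t)
    have hpb := cyc_parity hk (b - t)
    simp only [Fv]; split_ifs with h1 h2 h2 <;> omega

end

section
variable {k : ℕ}

lemma ub_mixed (hk : 3 ≤ k) (i : ZMod (4*k)) (d : ℕ) :
    (GP (4*k) 2).dist (inl i) (inl (i + ((2*d : ℕ) : ZMod (4*k)))) ≤ d + 2 := by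
  have t1 := (gp_conn hk).dist_triangle (u := inl i) (v := inr i)
    (w := inl (i + ((2*d : ℕ) : ZMod (4*k))))
  have t2 := (gp_conn hk).dist_triangle (u := inr i)
    (v := inr (i + ((2*d : ℕ) : ZMod (4*k)))) (w := inl (i + ((2*d : ℕ) : ZMod (4*k))))
  have h1 := ub_spoke hk i
  have h2 := ub_inner hk i d
  have h3 := ub_spoke' hk (i + ((2*d : ℕ) : ZMod (4*k)))
  omega

lemma ub_mixed_odd (hk : 3 ≤ k) (i : ZMod (4*k)) (d : ℕ) :
    (GP (4*k) 2).dist (inl i) (inl (i + ((2*d+1 : ℕ) : ZMod (4*k)))) ≤ d + 3 := by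
  have t1 := (gp_conn hk).dist_triangle (u := inl i)
    (v := inl (i + ((2*d : ℕ) : ZMod (4*k)))) (w := inl (i + ((2*d+1 : ℕ) : ZMod (4*k))))
  have h1 := ub_mixed hk i d
  have h2 : i + ((2*d+1 : ℕ) : ZMod (4*k)) = (i + ((2*d : ℕ) : ZMod (4*k))) + ((1:ℕ) : ZMod (4*k)) := by
    push_cast; ring
  have h3 := ub_outer hk (i + ((2*d : ℕ) : ZMod (4*k))) 1
  rw [← h2] at h3
  omega

lemma ub_uv_even (hk : 3 ≤ k) (i : ZMod (4*k)) (d : ℕ) :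
    (GP (4*k) 2).dist (inl i) (inr (i + ((2*d : ℕ) : ZMod (4*k)))) ≤ d + 1 := by
  have t1 := (gp_conn hk).dist_triangle (u := inl i) (v := inr i)
    (w := inr (i + ((2*d : ℕ) : ZMod (4*k))))
  have h1 := ub_spoke hk i
  have h2 := ub_inner hk i d
  omega

lemma ub_uv_odd (hk : 3 ≤ k) (i : ZMod (4*k)) (d : ℕ) :
    (GP (4*k) 2).dist (inl i) (inr (i + ((2*d+1 : ℕ) : ZMod (4*k)))) ≤ d + 2 := by
  have t1 := (gp_conn hk).dist_triangle (u := inl i) (v := inl (i + ((1:ℕ) : ZMod (4*k))))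
    (w := inr (i + ((2*d+1 : ℕ) : ZMod (4*k))))
  have h1 := ub_outer hk i 1
  have h2 := ub_uv_even hk (i + ((1:ℕ) : ZMod (4*k))) d
  have h3 : (i + ((1:ℕ) : ZMod (4*k))) + ((2*d : ℕ) : ZMod (4*k))
      = i + ((2*d+1 : ℕ) : ZMod (4*k)) := by push_cast; ring
  rw [h3] at h2
  omega

lemma ub_vv_odd (hk : 3 ≤ k) (i : ZMod (4*k)) (d : ℕ) :
    (GP (4*k) 2).dist (inr i) (inr (i + ((2*d+1 : ℕ) : ZMod (4*k)))) ≤ d + 3 := by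
  have t1 := (gp_conn hk).dist_triangle (u := inr i) (v := inl i)
    (w := inr (i + ((2*d+1 : ℕ) : ZMod (4*k))))
  have t2 := (gp_conn hk).dist_triangle (u := inl i) (v := inl (i + ((1:ℕ) : ZMod (4*k))))
    (w := inr (i + ((2*d+1 : ℕ) : ZMod (4*k))))
  have h0 := ub_spoke' hk i
  have h1 := ub_outer hk i 1
  have h2 := ub_uv_even hk (i + ((1:ℕ) : ZMod (4*k))) d
  have h3 : (i + ((1:ℕ) : ZMod (4*k))) + ((2*d : ℕ) : ZMod (4*k))
      = i + ((2*d+1 : ℕ) : ZMod (4*k)) := by push_cast; ring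
  rw [h3] at h2
  omega

lemma ub_inner_sub (hk : 3 ≤ k) (i : ZMod (4*k)) (d : ℕ) :
    (GP (4*k) 2).dist (inr i) (inr (i - ((2*d : ℕ) : ZMod (4*k)))) ≤ d := by
  have h := ub_inner hk (i - ((2*d : ℕ) : ZMod (4*k))) d
  rw [show i - ((2*d : ℕ) : ZMod (4*k)) + ((2*d : ℕ) : ZMod (4*k)) = i from by ring] at h
  rw [SimpleGraph.dist_comm]; exact h

lemma ub_uv_sub_even (hk : 3 ≤ k) (i : ZMod (4*k)) (d : ℕ) :
    (GP (4*k) 2).dist (inl i) (inr (i - ((2*d : ℕ) : ZMod (4*k)))) ≤ d + 1 := by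
  have t1 := (gp_conn hk).dist_triangle (u := inl i) (v := inr i)
    (w := inr (i - ((2*d : ℕ) : ZMod (4*k))))
  have h1 := ub_spoke hk i
  have h2 := ub_inner_sub hk i d
  omega

lemma ub_uv_sub_odd (hk : 3 ≤ k) (i : ZMod (4*k)) (d : ℕ) :
    (GP (4*k) 2).dist (inl i) (inr (i - ((2*d+1 : ℕ) : ZMod (4*k)))) ≤ d + 2 := by
  have t1 := (gp_conn hk).dist_triangle (u := inl i) (v := inl (i - 1))
    (w := inr (i - ((2*d+1 : ℕ) : ZMod (4*k))))
  have h1 := ub_outer hk (i - 1) 1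
  rw [show (i - 1) + ((1:ℕ) : ZMod (4*k)) = i from by push_cast; ring] at h1
  rw [SimpleGraph.dist_comm] at h1
  have h2 := ub_uv_sub_even hk (i - 1) d
  rw [show (i - 1) - ((2*d : ℕ) : ZMod (4*k)) = i - ((2*d+1 : ℕ) : ZMod (4*k)) from by
    push_cast; ring] at h2
  omega

lemma dist_uu (hk : 3 ≤ k) (i : ZMod (4*k)) {m : ℕ} (hm : m ≤ 2*k) :
    (GP (4*k) 2).dist (inl i) (inl (i + ((m:ℕ) : ZMod (4*k)))) = min m ((m+1)/2 + 2) := by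
  haveI : NeZero (4*k) := ⟨by omega⟩
  apply le_antisymm
  · apply le_min (ub_outer hk i m)
    obtain ⟨d, hd⟩ : ∃ d, m = 2*d ∨ m = 2*d+1 := ⟨m/2, by omega⟩
    rcases hd with hd|hd <;> subst hd
    · have := ub_mixed hk i d; omega
    · have := ub_mixed_odd hk i d; omega
  · have h0 : Fu k (i + ((m:ℕ) : ZMod (4*k))) (inl (i + ((m:ℕ) : ZMod (4*k)))) = 0 := by
      simp [Fu, cyc_zero]
    have hlb := lipschitz_le_dist hk _ (Fu_lip hk (i + ((m:ℕ) : ZMod (4*k))))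
      (x := inl i) h0
    have hc : cyc (i - (i + ((m:ℕ) : ZMod (4*k)))) = m := by
      rw [show i - (i + ((m:ℕ) : ZMod (4*k))) = -((m:ℕ) : ZMod (4*k)) from by ring,
        cyc_neg, cyc_natCast hk hm]
    simp only [Fu, hc] at hlb
    exact hlb

lemma dist_uv (hk : 3 ≤ k) (i : ZMod (4*k)) {m : ℕ} (hm : m ≤ 2*k) :
    (GP (4*k) 2).dist (inl i) (inr (i + ((m:ℕ) : ZMod (4*k)))) = (m+1)/2 + 1 := by
  haveI : NeZero (4*k) := ⟨by omega⟩
  apply le_antisymm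
  · obtain ⟨d, hd⟩ : ∃ d, m = 2*d ∨ m = 2*d+1 := ⟨m/2, by omega⟩
    rcases hd with hd|hd <;> subst hd
    · have := ub_uv_even hk i d; omega
    · have := ub_uv_odd hk i d; omega
  · have h0 : Fv k (i + ((m:ℕ) : ZMod (4*k))) (inr (i + ((m:ℕ) : ZMod (4*k)))) = 0 := by
      simp [Fv, cyc_zero]
    have hlb := lipschitz_le_dist hk _ (Fv_lip hk (i + ((m:ℕ) : ZMod (4*k))))
      (x := inl i) h0
    have hc : cyc (i - (i + ((m:ℕ) : ZMod (4*k)))) = m := by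
      rw [show i - (i + ((m:ℕ) : ZMod (4*k))) = -((m:ℕ) : ZMod (4*k)) from by ring,
        cyc_neg, cyc_natCast hk hm]
    simp only [Fv, hc] at hlb
    exact hlb

lemma dist_uv_sub (hk : 3 ≤ k) (i : ZMod (4*k)) {m : ℕ} (hm : m ≤ 2*k) :
    (GP (4*k) 2).dist (inl i) (inr (i - ((m:ℕ) : ZMod (4*k)))) = (m+1)/2 + 1 := by
  haveI : NeZero (4*k) := ⟨by omega⟩
  apply le_antisymm
  · obtain ⟨d, hd⟩ : ∃ d, m = 2*d ∨ m = 2*d+1 := ⟨m/2, by omega⟩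
    rcases hd with hd|hd <;> subst hd
    · have := ub_uv_sub_even hk i d; omega
    · have := ub_uv_sub_odd hk i d; omega
  · have h0 : Fv k (i - ((m:ℕ) : ZMod (4*k))) (inr (i - ((m:ℕ) : ZMod (4*k)))) = 0 := by
      simp [Fv, cyc_zero]
    have hlb := lipschitz_le_dist hk _ (Fv_lip hk (i - ((m:ℕ) : ZMod (4*k))))
      (x := inl i) h0
    have hc : cyc (i - (i - ((m:ℕ) : ZMod (4*k)))) = m := by
      rw [show i - (i - ((m:ℕ) : ZMod (4*k))) = ((m:ℕ) : ZMod (4*k)) from by ring,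
        cyc_natCast hk hm]
    simp only [Fv, hc] at hlb
    exact hlb

lemma dist_vv_even (hk : 3 ≤ k) (i : ZMod (4*k)) {d : ℕ} (hd : d ≤ k) :
    (GP (4*k) 2).dist (inr i) (inr (i + ((2*d : ℕ) : ZMod (4*k)))) = d := by
  haveI : NeZero (4*k) := ⟨by omega⟩
  apply le_antisymm (ub_inner hk i d)
  have h0 : Fv k (i + ((2*d:ℕ) : ZMod (4*k))) (inr (i + ((2*d:ℕ) : ZMod (4*k)))) = 0 := by
    simp [Fv, cyc_zero]
  have hlb := lipschitz_le_dist hk _ (Fv_lip hk (i + ((2*d:ℕ) : ZMod (4*k))))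
    (x := inr i) h0
  have he : i - (i + ((2*d:ℕ) : ZMod (4*k))) = -((2*d:ℕ) : ZMod (4*k)) := by ring
  have hc : cyc (i - (i + ((2*d:ℕ) : ZMod (4*k)))) = 2*d := by
    rw [he, cyc_neg, cyc_natCast hk (by omega)]
  have hpar : (i - (i + ((2*d:ℕ) : ZMod (4*k)))).val % 2 = 0 := by
    rw [he]; rw [neg_cast_val_parity hk (by omega)]; omega
  simp only [Fv, hc, hpar, if_true] at hlb
  omega

lemma dist_vv_odd (hk : 3 ≤ k) (i : ZMod (4*k)) {d : ℕ} (hd : 2*d+1 ≤ 2*k) :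
    (GP (4*k) 2).dist (inr i) (inr (i + ((2*d+1 : ℕ) : ZMod (4*k)))) = d + 3 := by
  haveI : NeZero (4*k) := ⟨by omega⟩
  apply le_antisymm (ub_vv_odd hk i d)
  have h0 : Fv k (i + ((2*d+1:ℕ) : ZMod (4*k))) (inr (i + ((2*d+1:ℕ) : ZMod (4*k)))) = 0 := by
    simp [Fv, cyc_zero]
  have hlb := lipschitz_le_dist hk _ (Fv_lip hk (i + ((2*d+1:ℕ) : ZMod (4*k))))
    (x := inr i) h0
  have he : i - (i + ((2*d+1:ℕ) : ZMod (4*k))) = -((2*d+1:ℕ) : ZMod (4*k)) := by ring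
  have hc : cyc (i - (i + ((2*d+1:ℕ) : ZMod (4*k)))) = 2*d+1 := by
    rw [he, cyc_neg, cyc_natCast hk (by omega)]
  have hpar : (i - (i + ((2*d+1:ℕ) : ZMod (4*k)))).val % 2 = 1 := by
    rw [he]; rw [neg_cast_val_parity hk (by omega)]; omega
  simp only [Fv, hc, hpar] at hlb
  rw [if_neg (by omega : ¬(1 = 0))] at hlb
  omega

end
def Sset (k : ℕ) : Set (ZMod (4*k) ⊕ ZMod (4*k)) :=
  {x | ∃ i : ℕ, i ≤ 2*k - 1 ∧ x = Sum.inl ((i : ℕ) : ZMod (4*k))} ∪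
  {x | ∃ i : ℕ, i ≤ k - 1 ∧ x = Sum.inl ((2*k + 2*i + 1 : ℕ) : ZMod (4*k))} ∪
  {x | ∃ i : ℕ, i ≤ 2*k - 1 ∧ x = Sum.inr ((2*i + 1 : ℕ) : ZMod (4*k))}

section
variable {k : ℕ}

lemma SR_swap {V : Type*} {G : SimpleGraph V} {w u v : V}
    (h : StronglyResolves G w u v) : StronglyResolves G w v u := h.symm

lemma mem_inl_lt (hk : 3 ≤ k) {i : ZMod (4*k)} (h : i.val < 2*k) : inl i ∈ Sset k := by
  haveI : NeZero (4*k) := ⟨by omega⟩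
  exact Or.inl (Or.inl ⟨i.val, by omega, by rw [ZMod.natCast_zmod_val]⟩)

lemma mem_inl_odd (hk : 3 ≤ k) {i : ZMod (4*k)} (h : i.val % 2 = 1) : inl i ∈ Sset k := by
  haveI : NeZero (4*k) := ⟨by omega⟩
  by_cases h2 : i.val < 2*k
  · exact mem_inl_lt hk h2
  · refine Or.inl (Or.inr ⟨(i.val - (2*k+1))/2, ?_, ?_⟩)
    · have := ZMod.val_lt i; omega
    · have hh : 2*k + 2*((i.val - (2*k+1))/2) + 1 = i.val := by omega
      rw [hh, ZMod.natCast_zmod_val]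

lemma mem_inr_odd (hk : 3 ≤ k) {i : ZMod (4*k)} (h : i.val % 2 = 1) : inr i ∈ Sset k := by
  haveI : NeZero (4*k) := ⟨by omega⟩
  refine Or.inr ⟨(i.val - 1)/2, ?_, ?_⟩
  · have := ZMod.val_lt i; omega
  · rw [show 2*((i.val-1)/2)+1 = i.val from by omega, ZMod.natCast_zmod_val]

lemma not_mem_inl (hk : 3 ≤ k) {i : ZMod (4*k)} (h : inl i ∉ Sset k) :
    2*k ≤ i.val ∧ i.val % 2 = 0 := by
  constructor
  · by_contra h2; exact h (mem_inl_lt hk (by omega))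
  · rcases Nat.mod_two_eq_zero_or_one i.val with h2|h2
    · exact h2
    · exact absurd (mem_inl_odd hk h2) h

lemma not_mem_inr (hk : 3 ≤ k) {i : ZMod (4*k)} (h : inr i ∉ Sset k) : i.val % 2 = 0 := by
  rcases Nat.mod_two_eq_zero_or_one i.val with h2|h2
  · exact h2
  · exact absurd (mem_inr_odd hk h2) h

lemma val_succ_odd (hk : 3 ≤ k) {i : ZMod (4*k)} (hie : i.val % 2 = 0) :
    (i+1 : ZMod (4*k)).val % 2 = 1 := by
  have := val_add_one_parity hk i; omega

lemma val_pred_odd (hk : 3 ≤ k) {i : ZMod (4*k)} (hie : i.val % 2 = 0) :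
    (i-1 : ZMod (4*k)).val % 2 = 1 := by
  have h := val_add_one_parity hk (i-1)
  rw [show (i-1)+1 = i from by ring] at h
  omega

-- case: outer-outer pair
lemma case_uu (hk : 3 ≤ k) (i : ZMod (4*k)) {m : ℕ} (hm1 : 2 ≤ m) (hm2 : m ≤ 2*k - 2)
    (hme : m % 2 = 0) (hie : i.val % 2 = 0) :
    ∃ w ∈ Sset k, StronglyResolves (GP (4*k) 2) w (inl i) (inl (i + ((m:ℕ) : ZMod (4*k)))) := by
  haveI : NeZero (4*k) := ⟨by omega⟩
  refine ⟨inl (i - 1), mem_inl_odd hk (val_pred_odd hk hie), Or.inr ?_⟩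
  have e1 : (GP (4*k) 2).dist (inl (i-1)) (inl i) = 1 := by
    have h := dist_uu hk (i-1) (m := 1) (by omega)
    rw [show (i-1) + ((1:ℕ) : ZMod (4*k)) = i from by push_cast; ring] at h
    omega
  have e2 := dist_uu hk i (m := m) (by omega)
  have e3 : (GP (4*k) 2).dist (inl (i-1)) (inl (i + ((m:ℕ) : ZMod (4*k))))
      = min (m+1) ((m+1+1)/2+2) := by
    have h := dist_uu hk (i-1) (m := m+1) (by omega)
    rw [show (i-1) + ((m+1:ℕ) : ZMod (4*k)) = i + ((m:ℕ) : ZMod (4*k)) from by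
      push_cast; ring] at h
    exact h
  rw [e3, e1, e2]; omega

-- case: inner-inner pair, non-antipodal
lemma case_vv_near (hk : 3 ≤ k) (i : ZMod (4*k)) {m : ℕ} (hm1 : 2 ≤ m) (hm2 : m ≤ 2*k - 2)
    (hme : m % 2 = 0) (hie : i.val % 2 = 0) :
    ∃ w ∈ Sset k, StronglyResolves (GP (4*k) 2) w (inr i) (inr (i + ((m:ℕ) : ZMod (4*k)))) := by
  haveI : NeZero (4*k) := ⟨by omega⟩
  obtain ⟨d, rfl⟩ : ∃ d, m = 2*d := ⟨m/2, by omega⟩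
  refine ⟨inr (i - 1), mem_inr_odd hk (val_pred_odd hk hie), Or.inr ?_⟩
  have e1 : (GP (4*k) 2).dist (inr (i-1)) (inr i) = 3 := by
    have h := dist_vv_odd hk (i-1) (d := 0) (by omega)
    rw [show (i-1) + ((2*0+1:ℕ) : ZMod (4*k)) = i from by push_cast; ring] at h
    omega
  have e2 := dist_vv_even hk i (d := d) (by omega)
  have e3 : (GP (4*k) 2).dist (inr (i-1)) (inr (i + ((2*d:ℕ) : ZMod (4*k)))) = d + 3 := by
    have h := dist_vv_odd hk (i-1) (d := d) (by omega)
    rw [show (i-1) + ((2*d+1:ℕ) : ZMod (4*k)) = i + ((2*d:ℕ) : ZMod (4*k)) from by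
      push_cast; ring] at h
    exact h
  rw [e3, e1, e2]; omega

-- case: inner-inner antipodal
lemma case_vv_far (hk : 3 ≤ k) (i : ZMod (4*k)) (hiv : i.val < 2*k) :
    ∃ w ∈ Sset k, StronglyResolves (GP (4*k) 2) w (inr i)
      (inr (i + ((2*k:ℕ) : ZMod (4*k)))) := by
  haveI : NeZero (4*k) := ⟨by omega⟩
  refine ⟨inl i, mem_inl_lt hk hiv, Or.inr ?_⟩
  have e1 : (GP (4*k) 2).dist (inl i) (inr i) = 1 := by
    have h := dist_uv hk i (m := 0) (by omega)
    rw [show i + ((0:ℕ) : ZMod (4*k)) = i from by push_cast; ring] at h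
    omega
  have e2 := dist_vv_even hk i (d := k) le_rfl
  have e3 := dist_uv hk i (m := 2*k) le_rfl
  rw [e3, e1, e2]; omega

-- case: u_i, v_i
lemma case_uv0 (hk : 3 ≤ k) (i : ZMod (4*k)) (hie : i.val % 2 = 0) :
    ∃ w ∈ Sset k, StronglyResolves (GP (4*k) 2) w (inl i) (inr i) := by
  haveI : NeZero (4*k) := ⟨by omega⟩
  refine ⟨inl (i + 1), mem_inl_odd hk (val_succ_odd hk hie), Or.inr ?_⟩
  have e1 : (GP (4*k) 2).dist (inl (i+1)) (inl i) = 1 := by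
    have h := dist_uu hk i (m := 1) (by omega)
    rw [show i + ((1:ℕ) : ZMod (4*k)) = i + 1 from by push_cast; ring] at h
    rw [SimpleGraph.dist_comm]; omega
  have e2 : (GP (4*k) 2).dist (inl i) (inr i) = 1 := by
    have h := dist_uv hk i (m := 0) (by omega)
    rw [show i + ((0:ℕ) : ZMod (4*k)) = i from by push_cast; ring] at h
    omega
  have e3 : (GP (4*k) 2).dist (inl (i+1)) (inr i) = 2 := by
    have h := dist_uv_sub hk (i+1) (m := 1) (by omega)
    rw [show (i+1) - ((1:ℕ) : ZMod (4*k)) = i from by push_cast; ring] at h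
    omega
  rw [e3, e1, e2]

-- case: u_i, v_{i+m} forward
lemma case_uv_plus (hk : 3 ≤ k) (i : ZMod (4*k)) {m : ℕ} (hm1 : 2 ≤ m) (hm2 : m ≤ 2*k - 2)
    (hme : m % 2 = 0) (hie : i.val % 2 = 0) :
    ∃ w ∈ Sset k, StronglyResolves (GP (4*k) 2) w (inl i) (inr (i + ((m:ℕ) : ZMod (4*k)))) := by
  haveI : NeZero (4*k) := ⟨by omega⟩
  refine ⟨inl (i - 1), mem_inl_odd hk (val_pred_odd hk hie), Or.inr ?_⟩
  have e1 : (GP (4*k) 2).dist (inl (i-1)) (inl i) = 1 := by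
    have h := dist_uu hk (i-1) (m := 1) (by omega)
    rw [show (i-1) + ((1:ℕ) : ZMod (4*k)) = i from by push_cast; ring] at h
    omega
  have e2 := dist_uv hk i (m := m) (by omega)
  have e3 : (GP (4*k) 2).dist (inl (i-1)) (inr (i + ((m:ℕ) : ZMod (4*k)))) = (m+2)/2 + 1 := by
    have h := dist_uv hk (i-1) (m := m+1) (by omega)
    rw [show (i-1) + ((m+1:ℕ) : ZMod (4*k)) = i + ((m:ℕ) : ZMod (4*k)) from by
      push_cast; ring] at h
    exact h
  rw [e3, e1, e2]; omega

-- case: u_i, v_{i-m} backward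
lemma case_uv_minus (hk : 3 ≤ k) (i : ZMod (4*k)) {m : ℕ} (hm1 : 2 ≤ m) (hm2 : m ≤ 2*k - 2)
    (hme : m % 2 = 0) (hie : i.val % 2 = 0) :
    ∃ w ∈ Sset k, StronglyResolves (GP (4*k) 2) w (inl i) (inr (i - ((m:ℕ) : ZMod (4*k)))) := by
  haveI : NeZero (4*k) := ⟨by omega⟩
  refine ⟨inl (i + 1), mem_inl_odd hk (val_succ_odd hk hie), Or.inr ?_⟩
  have e1 : (GP (4*k) 2).dist (inl (i+1)) (inl i) = 1 := by
    have h := dist_uu hk i (m := 1) (by omega)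
    rw [show i + ((1:ℕ) : ZMod (4*k)) = i + 1 from by push_cast; ring] at h
    rw [SimpleGraph.dist_comm]; omega
  have e2 := dist_uv_sub hk i (m := m) (by omega)
  have e3 : (GP (4*k) 2).dist (inl (i+1)) (inr (i - ((m:ℕ) : ZMod (4*k)))) = (m+2)/2 + 1 := by
    have h := dist_uv_sub hk (i+1) (m := m+1) (by omega)
    rw [show (i+1) - ((m+1:ℕ) : ZMod (4*k)) = i - ((m:ℕ) : ZMod (4*k)) from by
      push_cast; ring] at h
    exact h
  rw [e3, e1, e2]; omega

-- case: u_i, v_{i+2k} antipodal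
lemma case_uv_anti (hk : 3 ≤ k) (i : ZMod (4*k)) (hge : 2*k ≤ i.val) :
    ∃ w ∈ Sset k, StronglyResolves (GP (4*k) 2) w (inl i)
      (inr (i + ((2*k:ℕ) : ZMod (4*k)))) := by
  haveI : NeZero (4*k) := ⟨by omega⟩
  have hv2k : ((2*k:ℕ) : ZMod (4*k)).val = 2*k := ZMod.val_cast_of_lt (by omega)
  have hzero : ((2*k:ℕ) : ZMod (4*k)) + ((2*k:ℕ) : ZMod (4*k)) = 0 := by
    rw [← Nat.cast_add, show 2*k+2*k = 4*k from by ring, ZMod.natCast_self]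
  have hval : (i + ((2*k:ℕ) : ZMod (4*k))).val = i.val - 2*k := by
    rw [ZMod.val_add, hv2k]
    have hi := ZMod.val_lt i
    rw [Nat.mod_eq_sub_mod (by omega), Nat.mod_eq_of_lt (by omega)]
    omega
  refine ⟨inl (i + ((2*k:ℕ) : ZMod (4*k))), mem_inl_lt hk (by have := ZMod.val_lt i; omega),
    Or.inl ?_⟩
  have e1 : (GP (4*k) 2).dist (inl (i + ((2*k:ℕ) : ZMod (4*k)))) (inl i)
      = min (2*k) ((2*k+1)/2+2) := by
    have h := dist_uu hk (i + ((2*k:ℕ) : ZMod (4*k))) (m := 2*k) le_rfl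
    rw [show (i + ((2*k:ℕ) : ZMod (4*k))) + ((2*k:ℕ) : ZMod (4*k))
        = i + (((2*k:ℕ) : ZMod (4*k)) + ((2*k:ℕ) : ZMod (4*k))) from by ring] at h
    rw [hzero, add_zero] at h
    exact h
  have e2 : (GP (4*k) 2).dist (inl (i + ((2*k:ℕ) : ZMod (4*k))))
      (inr (i + ((2*k:ℕ) : ZMod (4*k)))) = 1 := by
    have h := dist_uv hk (i + ((2*k:ℕ) : ZMod (4*k))) (m := 0) (by omega)
    rw [show (i + ((2*k:ℕ) : ZMod (4*k))) + ((0:ℕ) : ZMod (4*k))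
        = i + ((2*k:ℕ) : ZMod (4*k)) from by push_cast; ring] at h
    omega
  have e3 : (GP (4*k) 2).dist (inr (i + ((2*k:ℕ) : ZMod (4*k)))) (inl i) = k + 1 := by
    rw [SimpleGraph.dist_comm]
    have h := dist_uv hk i (m := 2*k) le_rfl
    omega
  rw [e3, e1, e2]; omega

end
section
variable {k : ℕ}

lemma add_sub_val (hk : 3 ≤ k) {i j : ZMod (4*k)} (hle : i.val ≤ j.val) :
    j = i + (((j.val - i.val : ℕ)) : ZMod (4*k)) := by
  haveI : NeZero (4*k) := ⟨by omega⟩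
  have h1 : (j.val - i.val) + i.val = j.val := by omega
  calc j = ((j.val : ℕ) : ZMod (4*k)) := (ZMod.natCast_zmod_val j).symm
    _ = (((j.val - i.val) + i.val : ℕ) : ZMod (4*k)) := by rw [h1]
    _ = i + ((j.val - i.val : ℕ) : ZMod (4*k)) := by
        push_cast; rw [ZMod.natCast_zmod_val]; ring

lemma cast_compl (hk : 3 ≤ k) {m : ℕ} (hm : m ≤ 4*k) :
    ((m : ℕ) : ZMod (4*k)) + ((4*k - m : ℕ) : ZMod (4*k)) = 0 := by
  haveI : NeZero (4*k) := ⟨by omega⟩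
  rw [← Nat.cast_add, show m + (4*k-m) = 4*k from by omega, ZMod.natCast_self]

lemma val_eq_imp (hk : 3 ≤ k) {i j : ZMod (4*k)} (h : i.val = j.val) : i = j := by
  haveI : NeZero (4*k) := ⟨by omega⟩
  rw [← ZMod.natCast_zmod_val i, ← ZMod.natCast_zmod_val j, h]

lemma case_uv_main (hk : 3 ≤ k) (i j : ZMod (4*k)) (hge : 2*k ≤ i.val)
    (hie : i.val % 2 = 0) (hje : j.val % 2 = 0) :
    ∃ w ∈ Sset k, StronglyResolves (GP (4*k) 2) w (inl i) (inr j) := by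
  haveI : NeZero (4*k) := ⟨by omega⟩
  have hi4 := ZMod.val_lt i
  have hj4 := ZMod.val_lt j
  rcases lt_trichotomy i.val j.val with hlt|heq|hlt
  · have hj : j = i + ((j.val - i.val : ℕ) : ZMod (4*k)) := add_sub_val hk hlt.le
    rw [hj]
    exact case_uv_plus hk i (by omega) (by omega) (by omega) hie
  · have h := (val_eq_imp hk heq).symm
    exact h ▸ case_uv0 hk i hie
  · obtain ⟨m, hm⟩ : ∃ m : ℕ, m = i.val - j.val := ⟨_, rfl⟩
    have hi' : i = j + ((m : ℕ) : ZMod (4*k)) := by rw [hm]; exact add_sub_val hk hlt.le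
    have hj : j = i - ((m : ℕ) : ZMod (4*k)) := by rw [hi']; ring
    rcases lt_trichotomy m (2*k) with h1|h1|h1
    · rw [hj]; exact case_uv_minus hk i (by omega) (by omega) (by omega) hie
    · have hcc := cast_compl hk (m := 2*k) (by omega)
      rw [show 4*k - 2*k = 2*k from by omega] at hcc
      have hneg : -(((2*k:ℕ)) : ZMod (4*k)) = ((2*k:ℕ) : ZMod (4*k)) := by
        rw [neg_eq_iff_add_eq_zero]; exact hcc
      have hj2 : j = i + ((2*k:ℕ) : ZMod (4*k)) := by
        rw [hj, h1, sub_eq_add_neg, hneg]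
      rw [hj2]; exact case_uv_anti hk i hge
    · have hcc := cast_compl hk (m := m) (by omega)
      have hneg : -(((m : ℕ)) : ZMod (4*k))
          = ((4*k - m : ℕ) : ZMod (4*k)) := by
        rw [neg_eq_iff_add_eq_zero]; exact hcc
      have hj2 : j = i + ((4*k - m : ℕ) : ZMod (4*k)) := by
        rw [hj, sub_eq_add_neg, hneg]
      rw [hj2]
      exact case_uv_plus hk i (by omega) (by omega) (by omega) hie

lemma case_vv_lt (hk : 3 ≤ k) (i j : ZMod (4*k)) (hlt : i.val < j.val)
    (hie : i.val % 2 = 0) (hje : j.val % 2 = 0) :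
    ∃ w ∈ Sset k, StronglyResolves (GP (4*k) 2) w (inr i) (inr j) := by
  haveI : NeZero (4*k) := ⟨by omega⟩
  have hi4 := ZMod.val_lt i
  have hj4 := ZMod.val_lt j
  have hj : j = i + ((j.val - i.val : ℕ) : ZMod (4*k)) := add_sub_val hk hlt.le
  rcases lt_trichotomy (j.val - i.val) (2*k) with h1|h1|h1
  · rw [hj]; exact case_vv_near hk i (by omega) (by omega) (by omega) hie
  · rw [hj, h1]; exact case_vv_far hk i (by omega)
  · obtain ⟨m, hm⟩ : ∃ m : ℕ, m = j.val - i.val := ⟨_, rfl⟩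
    rw [← hm] at hj
    have hcc := cast_compl hk (m := m) (by omega)
    have hneg : ((m : ℕ) : ZMod (4*k))
        = -(((4*k - m : ℕ)) : ZMod (4*k)) := by
      rw [eq_neg_iff_add_eq_zero]; exact hcc
    have hi' : i = j + ((4*k - m : ℕ) : ZMod (4*k)) := by
      rw [hj, hneg]; ring
    obtain ⟨w, hw, hsr⟩ := case_vv_near hk j (m := 4*k - m)
      (by omega) (by omega) (by omega) hje
    rw [← hi'] at hsr
    exact ⟨w, hw, SR_swap hsr⟩

lemma case_uu_lt (hk : 3 ≤ k) (i j : ZMod (4*k)) (hlt : i.val < j.val)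
    (hgei : 2*k ≤ i.val) (hie : i.val % 2 = 0) (hje : j.val % 2 = 0) :
    ∃ w ∈ Sset k, StronglyResolves (GP (4*k) 2) w (inl i) (inl j) := by
  haveI : NeZero (4*k) := ⟨by omega⟩
  have hj4 := ZMod.val_lt j
  have hj : j = i + ((j.val - i.val : ℕ) : ZMod (4*k)) := add_sub_val hk hlt.le
  rw [hj]
  exact case_uu hk i (by omega) (by omega) (by omega) hie

lemma main_thm (hk : 3 ≤ k) : ∀ u v : (ZMod (4*k) ⊕ ZMod (4*k)), u ≠ v →
    ∃ w ∈ Sset k, StronglyResolves (GP (4*k) 2) w u v := by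
  haveI : NeZero (4*k) := ⟨by omega⟩
  intro x y hxy
  by_cases hx : x ∈ Sset k
  · exact ⟨x, hx, Or.inr (by rw [SimpleGraph.dist_self, Nat.zero_add])⟩
  by_cases hy : y ∈ Sset k
  · exact ⟨y, hy, Or.inl (by rw [SimpleGraph.dist_self, Nat.zero_add])⟩
  rcases x with i|i <;> rcases y with j|j
  · obtain ⟨hgei, hie⟩ := not_mem_inl hk hx
    obtain ⟨hgej, hje⟩ := not_mem_inl hk hy
    have hne : i.val ≠ j.val := fun h => hxy (by rw [val_eq_imp hk h])
    rcases lt_or_gt_of_ne hne with hlt|hlt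
    · exact case_uu_lt hk i j hlt hgei hie hje
    · obtain ⟨w, hw, hsr⟩ := case_uu_lt hk j i hlt hgej hje hie
      exact ⟨w, hw, SR_swap hsr⟩
  · obtain ⟨hgei, hie⟩ := not_mem_inl hk hx
    have hje := not_mem_inr hk hy
    exact case_uv_main hk i j hgei hie hje
  · obtain ⟨hgej, hje⟩ := not_mem_inl hk hy
    have hie := not_mem_inr hk hx
    obtain ⟨w, hw, hsr⟩ := case_uv_main hk j i hgej hje hie
    exact ⟨w, hw, SR_swap hsr⟩
  · have hie := not_mem_inr hk hx
    have hje := not_mem_inr hk hy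
    have hne : i.val ≠ j.val := fun h => hxy (by rw [val_eq_imp hk h])
    rcases lt_or_gt_of_ne hne with hlt|hlt
    · exact case_vv_lt hk i j hlt hie hje
    · obtain ⟨w, hw, hsr⟩ := case_vv_lt hk j i hlt hje hie
      exact ⟨w, hw, SR_swap hsr⟩

end


/-- For `k ≥ 3`, `S = {uᵢ : 0 ≤ i ≤ 2k−1} ∪ {u_{2k+2i+1} : 0 ≤ i ≤ k−1} ∪
{v_{2i+1} : 0 ≤ i ≤ 2k−1}` is a strong resolving set of `GP (4k) 2`. -/
theorem stmt_7 (k : ℕ) (hk : 3 ≤ k) :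
    IsStrongResolvingSet (GP (4*k) 2)
      ({x | ∃ i : ℕ, i ≤ 2*k - 1 ∧ x = Sum.inl ((i : ℕ) : ZMod (4*k))} ∪
       {x | ∃ i : ℕ, i ≤ k - 1 ∧ x = Sum.inl ((2*k + 2*i + 1 : ℕ) : ZMod (4*k))} ∪
       {x | ∃ i : ℕ, i ≤ 2*k - 1 ∧ x = Sum.inr ((2*i + 1 : ℕ) : ZMod (4*k))}) :=
  main_thm hk
end

section
/- In the generalized Petersen graph GP(4k,2) with k ≥ 3, for every i with 0 ≤ i ≤ 4k−1 one has d(v_i, v_{i+2k−1}) = k+2, and this value equals the diameter of GP(4k,2). -/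
namespace StmtAux

open SimpleGraph Sum

variable {k : ℕ}

abbrev V4 (k : ℕ) := ZMod (4*k) ⊕ ZMod (4*k)

lemma castk_ne_zero (hk : 3 ≤ k) {m : ℕ} (h0 : m ≠ 0) (h : m < 4*k) :
    ((m : ℕ) : ZMod (4*k)) ≠ 0 := by
  intro hc
  have := (ZMod.natCast_eq_zero_iff m (4*k)).mp hc
  have := Nat.le_of_dvd (Nat.pos_of_ne_zero h0) this
  omega

lemma zbasic (hk : 3 ≤ k) : ((1:ZMod (4*k)) ≠ 0) ∧ ((2:ZMod (4*k)) ≠ 0)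
    ∧ ((3:ZMod (4*k)) ≠ 0) ∧ ((4:ZMod (4*k)) ≠ 0) := by
  refine ⟨?_, ?_, ?_, ?_⟩
  · have := castk_ne_zero hk (m := 1) one_ne_zero (by omega); simpa using this
  · have := castk_ne_zero hk (m := 2) two_ne_zero (by omega); simpa using this
  · have := castk_ne_zero hk (m := 3) three_ne_zero (by omega); simpa using this
  · have := castk_ne_zero hk (m := 4) (by omega) (by omega); simpa using this

lemma adj_spoke (i : ZMod (4*k)) : (GP (4*k) 2).Adj (inl i) (inr i) := rfl

lemma adj_out (hk : 3 ≤ k) (i : ZMod (4*k)) : (GP (4*k) 2).Adj (inl i) (inl (i+1)) := by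
  refine ⟨?_, Or.inl rfl⟩
  intro h
  exact (zbasic hk).1 (by linear_combination -h)

lemma adj_in (hk : 3 ≤ k) (i : ZMod (4*k)) : (GP (4*k) 2).Adj (inr i) (inr (i+2)) := by
  refine ⟨fun h => (zbasic hk).2.1 (by linear_combination -h), Or.inl ?_⟩
  push_cast
  ring

def idx : V4 k → ZMod (4*k) := Sum.elim id id

def stepZ (x y : V4 k) : ℤ :=
  if idx y = idx x + 1 then 1 else if idx y = idx x - 1 then -1
  else if idx y = idx x + 2 then 2 else if idx y = idx x - 2 then -2 else 0

def outB (x y : V4 k) : Bool := x.isLeft && y.isLeft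
def spkB (x y : V4 k) : Bool := x.isLeft != y.isLeft
def innB (x y : V4 k) : Bool := !x.isLeft && !y.isLeft

lemma stepZ_spec (hk : 3 ≤ k) {x y : V4 k} (h : (GP (4*k) 2).Adj x y) :
    ((stepZ x y : ZMod (4*k)) = idx y - idx x) ∧
    (outB x y = true → (stepZ x y = 1 ∨ stepZ x y = -1)) ∧
    (spkB x y = true → stepZ x y = 0) ∧
    (innB x y = true → (stepZ x y = 2 ∨ stepZ x y = -2)) := by
  obtain ⟨h1, h2, h3, h4⟩ := zbasic hk
  rcases x with i | i <;> rcases y with j | j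
  · -- inl inl
    obtain ⟨hne, hj | hj⟩ := h <;> subst hj
    · have hs : stepZ (inl i) (inl (i+1)) = 1 := by
        simp only [stepZ, idx, Sum.elim_inl, id]
        simp
      refine ⟨?_, fun _ => Or.inl hs, ?_, ?_⟩
      · rw [hs]; push_cast; simp [idx]
      · simp [spkB]
      · simp [innB]
    · have hs : stepZ (inl (j+1)) (inl j) = -1 := by
        simp only [stepZ, idx, Sum.elim_inl, id]
        erw [if_neg (fun hc => h2 (by linear_combination -hc)), if_pos (by ring)]
      refine ⟨?_, fun _ => Or.inr hs, ?_, ?_⟩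
      · rw [hs]; push_cast; simp [idx]; try ring
      · simp [spkB]
      · simp [innB]
  · -- inl inr, h : i = j
    have hij : i = j := h
    subst hij
    have hs : stepZ (inl i) (inr i) = 0 := by
      simp only [stepZ, idx, Sum.elim_inl, Sum.elim_inr, id]
      erw [if_neg (fun hc => h1 (by linear_combination -hc)),
        if_neg (fun hc => h1 (by linear_combination hc)),
        if_neg (fun hc => h2 (by linear_combination -hc)),
        if_neg (fun hc => h2 (by linear_combination hc))]
    refine ⟨?_, ?_, fun _ => hs, ?_⟩
    · rw [hs]; push_cast; simp [idx]
    · simp [outB]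
    · simp [innB]
  · -- inr inl, h : i = j
    have hij : i = j := h
    subst hij
    have hs : stepZ (inr i) (inl i) = 0 := by
      simp only [stepZ, idx, Sum.elim_inl, Sum.elim_inr, id]
      erw [if_neg (fun hc => h1 (by linear_combination -hc)),
        if_neg (fun hc => h1 (by linear_combination hc)),
        if_neg (fun hc => h2 (by linear_combination -hc)),
        if_neg (fun hc => h2 (by linear_combination hc))]
    refine ⟨?_, ?_, fun _ => hs, ?_⟩
    · rw [hs]; push_cast; simp [idx]
    · simp [outB]
    · simp [innB]
  · -- inr inr
    obtain ⟨hne, hj | hj⟩ := h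
    · have hj' : j = i + 2 := by rw [hj]; push_cast; ring
      subst hj'
      have hs : stepZ (inr i) (inr (i+2)) = 2 := by
        simp only [stepZ, idx, Sum.elim_inr, id]
        rw [if_neg (fun hc => h1 (by linear_combination hc)),
          if_neg (fun hc => h3 (by linear_combination hc))]
        simp
      refine ⟨?_, ?_, ?_, fun _ => Or.inl hs⟩
      · rw [hs]; push_cast; simp [idx]
      · simp [outB]
      · simp [spkB]
    · have hj' : i = j + 2 := by rw [hj]; push_cast; ring
      subst hj'
      have hs : stepZ (inr (j+2)) (inr j) = -2 := by
        simp only [stepZ, idx, Sum.elim_inr, id]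
        erw [if_neg (fun hc => h3 (by linear_combination -hc)),
          if_neg (fun hc => h1 (by linear_combination -hc)),
          if_neg (fun hc => h4 (by linear_combination -hc)),
          if_pos (by ring)]
      refine ⟨?_, ?_, ?_, fun _ => Or.inr hs⟩
      · rw [hs]; push_cast; simp [idx]; try ring
      · simp [outB]
      · simp [spkB]

def aCt : ∀ {x y : V4 k}, (GP (4*k) 2).Walk x y → ℕ
  | _, _, .nil => 0
  | x, _, .cons (v := z) _ p => (if outB x z then 1 else 0) + aCt p

def sCt : ∀ {x y : V4 k}, (GP (4*k) 2).Walk x y → ℕ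
  | _, _, .nil => 0
  | x, _, .cons (v := z) _ p => (if spkB x z then 1 else 0) + sCt p

def bCt : ∀ {x y : V4 k}, (GP (4*k) 2).Walk x y → ℕ
  | _, _, .nil => 0
  | x, _, .cons (v := z) _ p => (if innB x z then 1 else 0) + bCt p

def dsp : ∀ {x y : V4 k}, (GP (4*k) 2).Walk x y → ℤ
  | _, _, .nil => 0
  | x, _, .cons (v := z) _ p => stepZ x z + dsp p

lemma dsp_cast (hk : 3 ≤ k) {x y : V4 k} (p : (GP (4*k) 2).Walk x y) :
    ((dsp p : ℤ) : ZMod (4*k)) = idx y - idx x := by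
  induction p with
  | nil => simp [dsp]
  | cons h q ih =>
    rename_i a b c
    show ((stepZ a b + dsp q : ℤ) : ZMod (4*k)) = _
    push_cast
    rw [(stepZ_spec hk h).1, ih]
    ring

lemma abs_dsp_le (hk : 3 ≤ k) {x y : V4 k} (p : (GP (4*k) 2).Walk x y) :
    |dsp p| ≤ (aCt p : ℤ) + 2 * (bCt p : ℤ) := by
  induction p with
  | nil => simp [dsp, aCt, bCt]
  | cons h q ih =>
    rename_i a b c
    have habs := abs_add_le (stepZ a b) (dsp q)
    show |stepZ a b + dsp q| ≤ ((if outB a b then 1 else 0) + aCt q : ℕ) + 2 * ((if innB a b then 1 else 0) + bCt q : ℕ)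
    have spec := stepZ_spec hk h
    rcases a with i | i <;> rcases b with j | j
    · have hs := spec.2.1 (by simp [outB])
      simp only [outB, innB, Sum.isLeft_inl, Bool.and_self, if_pos, Bool.not_true,
        Bool.and_false, Bool.false_and, if_neg Bool.false_ne_true]
      push_cast
      have : |stepZ (inl i : V4 k) (inl j)| ≤ 1 := by rcases hs with h' | h' <;> simp [h']
      linarith
    · have hs := spec.2.2.1 (by simp [spkB])
      simp only [outB, innB, Sum.isLeft_inl, Sum.isLeft_inr, Bool.and_false, Bool.false_and,
        if_neg Bool.false_ne_true, Bool.not_true, Bool.not_false]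
      push_cast
      rw [hs] at habs ⊢
      simpa using ih.trans (by push_cast; linarith)
    · have hs := spec.2.2.1 (by simp [spkB])
      simp only [outB, innB, Sum.isLeft_inl, Sum.isLeft_inr, Bool.and_false, Bool.false_and,
        if_neg Bool.false_ne_true, Bool.not_true, Bool.not_false]
      push_cast
      rw [hs] at habs ⊢
      simpa using ih.trans (by push_cast; linarith)
    · have hs := spec.2.2.2 (by simp [innB])
      simp only [outB, innB, Sum.isLeft_inr, Bool.and_self, Bool.false_and,
        if_neg Bool.false_ne_true, Bool.not_false, if_pos]
      push_cast
      have : |stepZ (inr i : V4 k) (inr j)| ≤ 2 := by rcases hs with h' | h' <;> simp [h']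
      linarith

lemma dsp_parity (hk : 3 ≤ k) {x y : V4 k} (p : (GP (4*k) 2).Walk x y) :
    (2:ℤ) ∣ dsp p - (aCt p : ℤ) := by
  induction p with
  | nil => simp [dsp, aCt]
  | cons h q ih =>
    rename_i a b c
    show (2:ℤ) ∣ (stepZ a b + dsp q) - ((if outB a b then 1 else 0) + aCt q : ℕ)
    have spec := stepZ_spec hk h
    rcases a with i | i <;> rcases b with j | j
    · have hs := spec.2.1 (by simp [outB])
      simp only [outB, Sum.isLeft_inl, Bool.and_self, if_pos]
      push_cast
      rcases hs with h' | h' <;> rw [h'] <;> omega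
    · have hs := spec.2.2.1 (by simp [spkB])
      simp only [outB, Sum.isLeft_inl, Sum.isLeft_inr, Bool.and_false, if_neg Bool.false_ne_true]
      push_cast
      rw [hs]; omega
    · have hs := spec.2.2.1 (by simp [spkB])
      simp only [outB, Sum.isLeft_inl, Sum.isLeft_inr, Bool.false_and, if_neg Bool.false_ne_true]
      push_cast
      rw [hs]; omega
    · have hs := spec.2.2.2 (by simp [innB])
      simp only [outB, Sum.isLeft_inr, Bool.false_and, if_neg Bool.false_ne_true]
      push_cast
      rcases hs with h' | h' <;> rw [h'] <;> omega

lemma len_eq {x y : V4 k} (p : (GP (4*k) 2).Walk x y) :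
    p.length = aCt p + sCt p + bCt p := by
  induction p with
  | nil => simp [aCt, sCt, bCt]
  | cons h q ih =>
    rename_i a b c
    show _ + 1 = ((if outB a b then 1 else 0) + aCt q) + ((if spkB a b then 1 else 0) + sCt q)
      + ((if innB a b then 1 else 0) + bCt q)
    rcases a with i | i <;> rcases b with j | j <;>
      simp [outB, spkB, innB, ih] <;> omega

lemma spk_mixed : ∀ {x y : V4 k} (p : (GP (4*k) 2).Walk x y),
    x.isLeft = true → y.isLeft = false → 1 ≤ sCt p := by
  intro x y p
  induction p with
  | nil => intro h1 h2; rw [h1] at h2; exact absurd h2 (by simp)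
  | cons h q ih =>
    rename_i a b c
    intro h1 h2
    show 1 ≤ (if spkB a b then 1 else 0) + sCt q
    rcases b with j | j
    · have := ih (by simp) h2
      omega
    · rcases a with i | i
      · simp [spkB]
      · simp at h1

lemma spk_two : ∀ {x y : V4 k} (p : (GP (4*k) 2).Walk x y),
    x.isLeft = false → y.isLeft = false → 1 ≤ aCt p → 2 ≤ sCt p := by
  intro x y p
  induction p with
  | nil => intro _ _ ha; simp [aCt] at ha
  | cons h q ih =>
    rename_i a b c
    intro hx hy ha
    rw [show sCt (SimpleGraph.Walk.cons h q) = (if spkB a b then 1 else 0) + sCt q from rfl]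
    rw [show aCt (SimpleGraph.Walk.cons h q) = (if outB a b then 1 else 0) + aCt q from rfl] at ha
    rcases a with i | i
    · simp at hx
    rcases b with j | j
    · have := spk_mixed q (by simp) hy
      simp [spkB]
      omega
    · have h1 : outB (inr i : V4 k) (inr j) = false := by simp [outB]
      rw [h1] at ha
      simp at ha
      have := ih (by simp) hy ha
      omega

lemma walk_lb (hk : 3 ≤ k) (i : ZMod (4*k))
    (p : (GP (4*k) 2).Walk (inr i) (inr (i + ((2*k-1 : ℕ) : ZMod (4*k))))) :
    k + 2 ≤ p.length := by
  have hc : ((2*k-1 : ℕ) : ℤ) = 2*(k:ℤ) - 1 := by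
    push_cast [Nat.cast_sub (by omega : 1 ≤ 2*k)]; ring
  -- divisibility
  have hcast := dsp_cast hk p
  have h0 : ((dsp p - ((2*k-1 : ℕ) : ℤ) : ℤ) : ZMod (4*k)) = 0 := by
    push_cast
    rw [hcast]
    simp [idx]
  have hdvd : ((4*k : ℕ) : ℤ) ∣ dsp p - ((2*k-1:ℕ) : ℤ) := by
    have := (ZMod.intCast_zmod_eq_zero_iff_dvd _ (4*k)).mp h0
    exact this
  obtain ⟨m, hm⟩ := hdvd
  rw [hc] at hm
  push_cast at hm
  -- S is odd, via: 2 ∣ S - (2k-1)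
  have heven : (2:ℤ) ∣ dsp p - (2*(k:ℤ) - 1) := ⟨2*(k:ℤ)*m, by rw [hm]; ring⟩
  have hpar := dsp_parity hk p
  have ha1 : 1 ≤ aCt p := by
    rcases hpar with ⟨t, ht⟩
    rcases heven with ⟨t', ht'⟩
    by_contra hcon
    have : aCt p = 0 := by omega
    rw [this] at ht
    omega
  -- |S| ≥ 2k-1
  have habs := abs_dsp_le hk p
  have hS : 2*(k:ℤ) - 1 ≤ (aCt p : ℤ) + 2 * (bCt p : ℤ) := by
    rcases le_or_gt 0 m with hm0 | hm0
    · have h1 : 0 ≤ 4*(k:ℤ)*m := by positivity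
      have h2 : dsp p ≤ |dsp p| := le_abs_self _
      linarith
    · have hm1 : m ≤ -1 := by omega
      have h1 : 4*(k:ℤ)*m ≤ 4*(k:ℤ)*(-1) := by
        apply mul_le_mul_of_nonneg_left hm1
        positivity
      have h2 : -dsp p ≤ |dsp p| := neg_le_abs _
      linarith
  have hs2 : 2 ≤ sCt p := spk_two p (by simp) (by simp) ha1
  have hlen := len_eq p
  have h3 : (2:ℤ)*(k:ℤ) + 4 ≤ 2 * p.length := by
    rw [hlen]
    push_cast
    linarith
  have h4 : 2*k + 4 ≤ 2*p.length := by exact_mod_cast h3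
  omega

lemma inner_walk (hk : 3 ≤ k) (m : ℕ) (i : ZMod (4*k)) :
    ∃ p : (GP (4*k) 2).Walk (inr i) (inr (i + ((2*m : ℕ) : ZMod (4*k)))), p.length = m := by
  induction m generalizing i with
  | zero => exact ⟨SimpleGraph.Walk.nil.copy rfl (by push_cast; ring_nf), by simp⟩
  | succ m ih =>
    obtain ⟨p, hp⟩ := ih (i + 2)
    refine ⟨(SimpleGraph.Walk.cons (adj_in hk i) p).copy rfl (by push_cast; ring_nf), by simpa⟩

lemma outer_walk (hk : 3 ≤ k) (m : ℕ) (i : ZMod (4*k)) :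
    ∃ p : (GP (4*k) 2).Walk (inl i) (inl (i + ((m : ℕ) : ZMod (4*k)))), p.length = m := by
  induction m generalizing i with
  | zero => exact ⟨SimpleGraph.Walk.nil.copy rfl (by push_cast; ring_nf), by simp⟩
  | succ m ih =>
    obtain ⟨p, hp⟩ := ih (i + 1)
    refine ⟨(SimpleGraph.Walk.cons (adj_out hk i) p).copy rfl (by push_cast; ring_nf), by simpa⟩

def rotHom (t : ZMod (4*k)) : GP (4*k) 2 →g GP (4*k) 2 where
  toFun := Sum.map (· + t) (· + t)
  map_rel' := by
    intro x y h
    rcases x with i | i <;> rcases y with j | j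
    · obtain ⟨hne, h2 | h2⟩ := h
      · exact ⟨fun hc => hne (by linear_combination hc), Or.inl (by rw [h2]; ring)⟩
      · exact ⟨fun hc => hne (by linear_combination hc), Or.inr (by rw [h2]; ring)⟩
    · have h' : i = j := h
      show i + t = j + t
      rw [h']
    · have h' : i = j := h
      show i + t = j + t
      rw [h']
    · obtain ⟨hne, h2 | h2⟩ := h
      · exact ⟨fun hc => hne (by linear_combination hc), Or.inl (by rw [h2]; ring)⟩
      · exact ⟨fun hc => hne (by linear_combination hc), Or.inr (by rw [h2]; ring)⟩

def negHom : GP (4*k) 2 →g GP (4*k) 2 where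
  toFun := Sum.map (fun i => -i) (fun i => -i)
  map_rel' := by
    intro x y h
    rcases x with i | i <;> rcases y with j | j
    · obtain ⟨hne, h2 | h2⟩ := h
      · exact ⟨fun hc => hne (by linear_combination -hc), Or.inr (by rw [h2]; ring)⟩
      · exact ⟨fun hc => hne (by linear_combination -hc), Or.inl (by rw [h2]; ring)⟩
    · have h' : i = j := h
      show -i = -j
      rw [h']
    · have h' : i = j := h
      show -i = -j
      rw [h']
    · obtain ⟨hne, h2 | h2⟩ := h
      · exact ⟨fun hc => hne (by linear_combination -hc), Or.inr (by rw [h2]; ring)⟩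
      · exact ⟨fun hc => hne (by linear_combination -hc), Or.inl (by rw [h2]; ring)⟩

lemma base_vv (hk : 3 ≤ k) (r : ℕ) (hr : r ≤ 2*k) :
    ∃ p : (GP (4*k) 2).Walk (inr 0) (inr ((r : ℕ) : ZMod (4*k))), p.length ≤ k + 2 := by
  rcases Nat.even_or_odd r with ⟨m, hm⟩ | ⟨m, hm⟩
  · obtain ⟨p, hp⟩ := inner_walk hk m 0
    have he : (0 : ZMod (4*k)) + ((2*m : ℕ) : ZMod (4*k)) = ((r:ℕ) : ZMod (4*k)) := by
      rw [zero_add]; congr 1; omega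
    exact ⟨p.copy rfl (by rw [he]), by simp only [SimpleGraph.Walk.length_copy, hp]; omega⟩
  · obtain ⟨p, hp⟩ := inner_walk hk m 0
    refine ⟨(((p.concat (adj_spoke _).symm).concat (adj_out hk _)).concat (adj_spoke _)).copy rfl ?_, ?_⟩
    · congr 1
      rw [zero_add]
      have h2 : 2*m + 1 = r := by omega
      rw [← h2]
      push_cast
      ring
    · simp only [SimpleGraph.Walk.length_copy, SimpleGraph.Walk.length_concat, hp]
      omega

lemma base_uv (hk : 3 ≤ k) (r : ℕ) (hr : r ≤ 2*k) :
    ∃ p : (GP (4*k) 2).Walk (inl 0) (inr ((r : ℕ) : ZMod (4*k))), p.length ≤ k + 2 := by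
  rcases Nat.even_or_odd r with ⟨m, hm⟩ | ⟨m, hm⟩
  · obtain ⟨p, hp⟩ := inner_walk hk m 0
    have he : (0 : ZMod (4*k)) + ((2*m : ℕ) : ZMod (4*k)) = ((r:ℕ) : ZMod (4*k)) := by
      rw [zero_add]; congr 1; omega
    refine ⟨(SimpleGraph.Walk.cons (adj_spoke 0) p).copy rfl (by rw [he]), ?_⟩
    simp only [SimpleGraph.Walk.length_copy, SimpleGraph.Walk.length_cons, hp]
    omega
  · obtain ⟨p, hp⟩ := inner_walk hk m (0+1)
    refine ⟨(SimpleGraph.Walk.cons (adj_out hk 0) (SimpleGraph.Walk.cons (adj_spoke _) p)).copy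
      rfl ?_, ?_⟩
    · congr 1
      have h2 : 2*m + 1 = r := by omega
      rw [← h2]
      push_cast
      ring
    · simp only [SimpleGraph.Walk.length_copy, SimpleGraph.Walk.length_cons, hp]
      omega

lemma base_uu (hk : 3 ≤ k) (r : ℕ) (hr : r ≤ 2*k) :
    ∃ p : (GP (4*k) 2).Walk (inl 0) (inl ((r : ℕ) : ZMod (4*k))), p.length ≤ k + 2 := by
  rcases Nat.even_or_odd r with ⟨m, hm⟩ | ⟨m, hm⟩
  · obtain ⟨p, hp⟩ := inner_walk hk m 0
    refine ⟨((SimpleGraph.Walk.cons (adj_spoke 0) p).concat (adj_spoke _).symm).copy rfl ?_, ?_⟩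
    · congr 1
      rw [zero_add]; congr 1; omega
    · simp only [SimpleGraph.Walk.length_copy, SimpleGraph.Walk.length_concat,
        SimpleGraph.Walk.length_cons, hp]
      omega
  · obtain ⟨p, hp⟩ := inner_walk hk m 0
    refine ⟨(((SimpleGraph.Walk.cons (adj_spoke 0) p).concat (adj_spoke _).symm).concat
      (adj_out hk _)).copy rfl ?_, ?_⟩
    · congr 1
      rw [zero_add]
      have h2 : 2*m + 1 = r := by omega
      rw [← h2]
      push_cast
      ring
    · simp only [SimpleGraph.Walk.length_copy, SimpleGraph.Walk.length_concat,
        SimpleGraph.Walk.length_cons, hp]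
      omega

lemma neg_cast_eq (hk : 3 ≤ k) {j : ZMod (4*k)} (r : ℕ) (hj : ((r:ℕ) : ZMod (4*k)) = j)
    (hr : r ≤ 4*k) : -(((4*k - r : ℕ) : ZMod (4*k))) = j := by
  rw [Nat.cast_sub hr]
  rw [ZMod.natCast_self, hj]
  ring

lemma from_inl0 (hk : 3 ≤ k) (z : V4 k) :
    ∃ p : (GP (4*k) 2).Walk (inl 0) z, p.length ≤ k + 2 := by
  haveI : NeZero (4*k) := ⟨by omega⟩
  rcases z with j | j
  · rcases le_or_gt j.val (2*k) with h | h
    · obtain ⟨p, hp⟩ := base_uu hk j.val h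
      exact ⟨p.copy rfl (by rw [ZMod.natCast_zmod_val]), by simpa using hp⟩
    · obtain ⟨p, hp⟩ := base_uu hk (4*k - j.val) (by omega)
      refine ⟨((p.map negHom).copy (by show inl (-(0 : ZMod (4*k))) = inl 0; rw [neg_zero]) ?_), ?_⟩
      · show inl (-(((4*k - j.val : ℕ) : ZMod (4*k)))) = inl j
        rw [neg_cast_eq hk j.val (ZMod.natCast_zmod_val j) (le_of_lt (ZMod.val_lt j))]
      · simpa [SimpleGraph.Walk.length_map] using hp
  · rcases le_or_gt j.val (2*k) with h | h
    · obtain ⟨p, hp⟩ := base_uv hk j.val h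
      exact ⟨p.copy rfl (by rw [ZMod.natCast_zmod_val]), by simpa using hp⟩
    · obtain ⟨p, hp⟩ := base_uv hk (4*k - j.val) (by omega)
      refine ⟨((p.map negHom).copy (by show inl (-(0 : ZMod (4*k))) = inl 0; rw [neg_zero]) ?_), ?_⟩
      · show inr (-(((4*k - j.val : ℕ) : ZMod (4*k)))) = inr j
        rw [neg_cast_eq hk j.val (ZMod.natCast_zmod_val j) (le_of_lt (ZMod.val_lt j))]
      · simpa [SimpleGraph.Walk.length_map] using hp

lemma from_inr0 (hk : 3 ≤ k) (z : V4 k) :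
    ∃ p : (GP (4*k) 2).Walk (inr 0) z, p.length ≤ k + 2 := by
  haveI : NeZero (4*k) := ⟨by omega⟩
  rcases z with j | j
  · obtain ⟨p, hp⟩ := from_inl0 hk (inr (-j))
    refine ⟨((p.map (rotHom j)).copy (by show inl ((0 : ZMod (4*k)) + j) = inl j; rw [zero_add])
      (by show inr (-j + j) = inr (0 : ZMod (4*k)); rw [neg_add_cancel])).reverse, ?_⟩
    simpa [SimpleGraph.Walk.length_reverse, SimpleGraph.Walk.length_map] using hp
  · rcases le_or_gt j.val (2*k) with h | h
    · obtain ⟨p, hp⟩ := base_vv hk j.val h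
      exact ⟨p.copy rfl (by rw [ZMod.natCast_zmod_val]), by simpa using hp⟩
    · obtain ⟨p, hp⟩ := base_vv hk (4*k - j.val) (by omega)
      refine ⟨((p.map negHom).copy (by show inr (-(0 : ZMod (4*k))) = inr 0; rw [neg_zero]) ?_), ?_⟩
      · show inr (-(((4*k - j.val : ℕ) : ZMod (4*k)))) = inr j
        rw [neg_cast_eq hk j.val (ZMod.natCast_zmod_val j) (le_of_lt (ZMod.val_lt j))]
      · simpa [SimpleGraph.Walk.length_map] using hp

lemma exists_short_walk (hk : 3 ≤ k) (x y : V4 k) :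
    ∃ p : (GP (4*k) 2).Walk x y, p.length ≤ k + 2 := by
  rcases x with i | i
  · obtain ⟨p, hp⟩ := from_inl0 hk ((rotHom (-i)) y)
    refine ⟨(p.map (rotHom i)).copy (by show inl ((0 : ZMod (4*k)) + i) = inl i; rw [zero_add]) ?_, ?_⟩
    · rcases y with a | a
      · show inl (a + -i + i) = inl a
        congr 1; ring
      · show inr (a + -i + i) = inr a
        congr 1; ring
    · simpa [SimpleGraph.Walk.length_map] using hp
  · obtain ⟨p, hp⟩ := from_inr0 hk ((rotHom (-i)) y)
    refine ⟨(p.map (rotHom i)).copy (by show inr ((0 : ZMod (4*k)) + i) = inr i; rw [zero_add]) ?_, ?_⟩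
    · rcases y with a | a
      · show inl (a + -i + i) = inl a
        congr 1; ring
      · show inr (a + -i + i) = inr a
        congr 1; ring
    · simpa [SimpleGraph.Walk.length_map] using hp

lemma dist_le_all (hk : 3 ≤ k) (x y : V4 k) : (GP (4*k) 2).dist x y ≤ k + 2 := by
  obtain ⟨p, hp⟩ := exists_short_walk hk x y
  exact le_trans (SimpleGraph.dist_le p) hp

lemma reach_all (hk : 3 ≤ k) (x y : V4 k) : (GP (4*k) 2).Reachable x y := by
  obtain ⟨p, _⟩ := exists_short_walk hk x y
  exact ⟨p⟩

lemma dist_vv (hk : 3 ≤ k) (i : ZMod (4*k)) :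
    (GP (4*k) 2).dist (inr i) (inr (i + ((2*k-1 : ℕ) : ZMod (4*k)))) = k + 2 := by
  refine le_antisymm (dist_le_all hk _ _) ?_
  obtain ⟨p, hp⟩ := (reach_all hk (inr i) (inr (i + ((2*k-1 : ℕ) : ZMod (4*k))))).exists_walk_length_eq_dist
  rw [← hp]
  exact walk_lb hk i p

lemma ediam_eq (hk : 3 ≤ k) : (GP (4*k) 2).ediam = ((k + 2 : ℕ) : ℕ∞) := by
  refine le_antisymm ?_ ?_
  · apply SimpleGraph.ediam_le_of_edist_le
    intro u v
    obtain ⟨p, hp⟩ := exists_short_walk hk u v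
    exact le_trans (SimpleGraph.edist_le p) (by exact_mod_cast hp)
  · have hne : (GP (4*k) 2).edist (inr (0 : ZMod (4*k))) (inr (((2*k-1 : ℕ) : ZMod (4*k)))) ≠ ⊤ :=
      SimpleGraph.edist_ne_top_iff_reachable.mpr (reach_all hk _ _)
    have h1 : ((GP (4*k) 2).dist (inr (0 : ZMod (4*k))) (inr (((2*k-1 : ℕ) : ZMod (4*k)))) : ℕ∞)
        = (GP (4*k) 2).edist (inr (0 : ZMod (4*k))) (inr (((2*k-1 : ℕ) : ZMod (4*k)))) := by
      rw [SimpleGraph.dist]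
      exact ENat.coe_toNat hne
    have h2 := dist_vv hk (0 : ZMod (4*k))
    rw [zero_add] at h2
    rw [h2] at h1
    exact h1.le.trans SimpleGraph.edist_le_ediam

lemma diam_eq (hk : 3 ≤ k) : (GP (4*k) 2).diam = k + 2 := by
  rw [SimpleGraph.diam, ediam_eq hk, ENat.toNat_coe]

end StmtAux

/-- In `GP (4k) 2` with `k ≥ 3`: `d(vᵢ, v_{i+2k−1}) = k+2` for `0 ≤ i ≤ 4k−1`, and
this equals the diameter. -/
theorem stmt_8 (k : ℕ) (hk : 3 ≤ k) :
    (∀ i : ℕ, i ≤ 4*k - 1 →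
      (GP (4*k) 2).dist (Sum.inr ((i : ℕ) : ZMod (4*k)))
        (Sum.inr ((i + (2*k - 1) : ℕ) : ZMod (4*k))) = k + 2) ∧
    (GP (4*k) 2).diam = k + 2 := by
  constructor
  · intro i _
    have := StmtAux.dist_vv hk ((i : ℕ) : ZMod (4*k))
    rw [Nat.cast_add]
    exact this
  · exact StmtAux.diam_eq hk
end

section
/- In the generalized Petersen graph GP(4k,2) with k ≥ 3, for every i with 0 ≤ i ≤ k−1 one has d(u_{2i}, u_{2i+2k}) = k+2. -/
/-- projection to the index -/
def phiGP {n : ℕ} : ZMod n ⊕ ZMod n → ZMod n := Sum.elim id id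
/-- 0 for outer (inl), 1 for inner (inr) vertices -/
def sigGP {n : ℕ} : ZMod n ⊕ ZMod n → ℕ := Sum.elim (fun _ => 0) (fun _ => 1)

lemma gp_walk_inv (n : ℕ) {x y : ZMod n ⊕ ZMod n} (p : (GP n 2).Walk x y) :
    ∃ (z : ℤ) (a b s : ℕ), p.length = a + b + s ∧
      (z : ZMod n) = phiGP y - phiGP x ∧ z.natAbs ≤ a + 2*b ∧
      (sigGP x ≠ sigGP y → 1 ≤ s) ∧ (1 ≤ b → 2 ≤ s + sigGP x + sigGP y) := by
  induction p with
  | nil => exact ⟨0, 0, 0, 0, by simp, by simp, by simp, by simp, by simp⟩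
  | @cons x x' y h p ih =>
    obtain ⟨z, a, b, s, hlen, hz, habs, hs1, hs2⟩ := ih
    rcases x with i | i <;> rcases x' with j | j
    · -- outer-outer
      obtain ⟨hne, hij⟩ := h
      rcases hij with hij | hij
      · refine ⟨z + 1, a + 1, b, s, by show p.length + 1 = _; omega, ?_, by omega, ?_, ?_⟩
        · subst hij; push_cast [hz]; simp only [phiGP, Sum.elim_inl, Sum.elim_inr, id_eq]; ring
        · intro hne'; exact hs1 (by simpa [sigGP] using hne')
        · intro hb; have := hs2 hb; simp [sigGP] at this ⊢; omega
      · refine ⟨z - 1, a + 1, b, s, by show p.length + 1 = _; omega, ?_, by omega, ?_, ?_⟩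
        · subst hij; push_cast [hz]; simp only [phiGP, Sum.elim_inl, Sum.elim_inr, id_eq]; ring
        · intro hne'; exact hs1 (by simpa [sigGP] using hne')
        · intro hb; have := hs2 hb; simp [sigGP] at this ⊢; omega
    · -- spoke out->in
      have hij : i = j := h
      refine ⟨z, a, b, s + 1, by simp [hlen]; omega, ?_, by omega, ?_, ?_⟩
      · rw [hz, hij]; rfl
      · intro _; omega
      · intro hb; have := hs2 hb; simp [sigGP] at this ⊢; omega
    · -- spoke in->out
      have hij : i = j := h
      refine ⟨z, a, b, s + 1, by simp [hlen]; omega, ?_, by omega, ?_, ?_⟩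
      · rw [hz, hij]; rfl
      · intro _; omega
      · intro _; simp [sigGP]; omega
    · -- inner-inner
      obtain ⟨hne, hij⟩ := h
      rcases hij with hij | hij
      · refine ⟨z + 2, a, b + 1, s, by show p.length + 1 = _; omega, ?_, by omega, ?_, ?_⟩
        · subst hij; push_cast [hz]; simp only [phiGP, Sum.elim_inl, Sum.elim_inr, id_eq]; ring
        · intro hne'; exact hs1 (by simpa [sigGP] using hne')
        · intro _
          rcases y with m | m
          · have := hs1 (by simp [sigGP]); simp only [sigGP, Sum.elim_inl, Sum.elim_inr] at *; omega
          · simp only [sigGP, Sum.elim_inl, Sum.elim_inr] at *; omega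
      · refine ⟨z - 2, a, b + 1, s, by show p.length + 1 = _; omega, ?_, by omega, ?_, ?_⟩
        · subst hij; push_cast [hz]; simp only [phiGP, Sum.elim_inl, Sum.elim_inr, id_eq]; ring
        · intro hne'; exact hs1 (by simpa [sigGP] using hne')
        · intro _
          rcases y with m | m
          · have := hs1 (by simp [sigGP]); simp only [sigGP, Sum.elim_inl, Sum.elim_inr] at *; omega
          · simp only [sigGP, Sum.elim_inl, Sum.elim_inr] at *; omega

lemma gp_inner_walk (n : ℕ) (h2 : ¬ (n ∣ 2)) (j : ZMod n) (m : ℕ) :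
    ∃ p : (GP n 2).Walk (Sum.inr j) (Sum.inr (j + ((2*m : ℕ) : ZMod n))), p.length = m := by
  induction m generalizing j with
  | zero =>
    exact ⟨(SimpleGraph.Walk.nil).copy rfl (by push_cast; ring), by simp⟩
  | succ m ih =>
    obtain ⟨p, hp⟩ := ih (j + 2)
    have hadj : (GP n 2).Adj (Sum.inr j) (Sum.inr (j + 2)) := by
      constructor
      · intro hj
        have : ((2 : ℕ) : ZMod n) = 0 := by
          have := hj; push_cast at this ⊢
          linear_combination -this
        rw [ZMod.natCast_eq_zero_iff] at this
        exact h2 this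
      · left; push_cast; ring
    have heq : j + 2 + ((2*m : ℕ) : ZMod n) = j + ((2*(m+1) : ℕ) : ZMod n) := by
      push_cast; ring
    exact ⟨SimpleGraph.Walk.cons hadj (p.copy rfl (by rw [heq])), by simp [hp]⟩

/-- In `GP (4k) 2` with `k ≥ 3`: `d(u_{2i}, u_{2i+2k}) = k+2` for `0 ≤ i ≤ k−1`. -/
theorem stmt_9 (k : ℕ) (hk : 3 ≤ k) :
    ∀ i : ℕ, i ≤ k - 1 →
      (GP (4*k) 2).dist (Sum.inl ((2*i : ℕ) : ZMod (4*k)))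
        (Sum.inl ((2*i + 2*k : ℕ) : ZMod (4*k))) = k + 2 := by
  intro i _
  haveI : NeZero (4*k) := ⟨by omega⟩
  set n := 4*k with hn
  -- explicit walk of length k+2
  obtain ⟨p, hp⟩ := gp_inner_walk n (fun h => by have := Nat.le_of_dvd (by norm_num) h; omega) ((2*i : ℕ) : ZMod n) k
  have h1 : (GP n 2).Adj (Sum.inl ((2*i : ℕ) : ZMod n)) (Sum.inr ((2*i : ℕ) : ZMod n)) := rfl
  have heq : ((2*i : ℕ) : ZMod n) + ((2*k : ℕ) : ZMod n) = ((2*i + 2*k : ℕ) : ZMod n) := by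
    push_cast; ring
  have h2 : (GP n 2).Adj (Sum.inr (((2*i : ℕ) : ZMod n) + ((2*k : ℕ) : ZMod n)))
      (Sum.inl ((2*i + 2*k : ℕ) : ZMod n)) := heq
  let W : (GP n 2).Walk (Sum.inl ((2*i : ℕ) : ZMod n)) (Sum.inl ((2*i + 2*k : ℕ) : ZMod n)) :=
    SimpleGraph.Walk.cons h1 (p.concat h2)
  have hWlen : W.length = k + 2 := by
    simp only [W, SimpleGraph.Walk.length_cons, SimpleGraph.Walk.length_concat, hp]
  have hle : (GP n 2).dist (Sum.inl ((2*i : ℕ) : ZMod n)) (Sum.inl ((2*i + 2*k : ℕ) : ZMod n)) ≤ k + 2 :=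
    hWlen ▸ SimpleGraph.dist_le W
  refine le_antisymm hle ?_
  obtain ⟨q, hq⟩ := SimpleGraph.Reachable.exists_walk_length_eq_dist ⟨W⟩
  obtain ⟨z, a, b, s, hlen, hz, habs, _, hs2⟩ := gp_walk_inv n q
  -- z ≡ 2k mod 4k
  have hz' : ((z - 2*k : ℤ) : ZMod n) = 0 := by
    simp only [phiGP, Sum.elim_inl, id_eq] at hz
    push_cast [hz]
    ring
  rw [ZMod.intCast_zmod_eq_zero_iff_dvd] at hz'
  obtain ⟨m, hm⟩ := hz'
  rw [hn] at hm
  push_cast at hm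
  have hzabs : 2*k ≤ z.natAbs := by
    rcases le_or_gt 0 m with hm0 | hm0
    · have h4 : (0:ℤ) ≤ 4*(k:ℤ)*m := mul_nonneg (by positivity) hm0
      have : (2*k : ℤ) ≤ z := by linarith
      omega
    · have h4 : 4*(k:ℤ)*m ≤ 4*(k:ℤ)*(-1) :=
        mul_le_mul_of_nonneg_left (by omega) (by positivity)
      have : z ≤ -(2*k : ℤ) := by linarith
      omega
  have hsig : sigGP (Sum.inl ((2*i : ℕ) : ZMod n)) = 0 ∧
      sigGP (Sum.inl ((2*i + 2*k : ℕ) : ZMod n)) = 0 := ⟨rfl, rfl⟩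
  rw [← hq, hlen]
  rcases Nat.eq_zero_or_pos b with hb | hb
  · omega
  · have := hs2 hb
    rw [hsig.1, hsig.2] at this
    omega
end
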